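/- Let $n = 3$, $P = (0,0,4)$, $Q = (1,1,2)$, and $Y = S_3\langle P, Q\rangle \subseteq \mathbb{C}^3$. Then the graded components of $\widehat{A}(Y) = \mathbb{C}[x_1,x_2,x_3]/T(Y)$ have dimensions $\dim_\mathbb{C} \widehat{A}(Y)_0 = 1$, $\dim_\mathbb{C} \widehat{A}(Y)_1 = 2$, $\dim_\mathbb{C} \widehat{A}(Y)_2 = 3$, and $\widehat{A}(Y)_d = 0$ for $d \geq 3$; moreover, as $S_3$-representations (with $S_3$ permuting the variables), the degree-0 component is the trivial representation, the degree-1 component is the 2-dimensional irreducible (standard) representation, and the degree-2 component is the direct sum of the standard representation and the trivial representation. -/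

import Mathlib

open MvPolynomial

noncomputable section

/-- The top degree component of a polynomial. -/
def topComponent {n : ℕ} (f : MvPolynomial (Fin n) ℂ) : MvPolynomial (Fin n) ℂ :=
  homogeneousComponent f.totalDegree f

/-- The top degree (associated graded) ideal `T(Y)` of a set `Y ⊆ ℂⁿ`. -/
def topIdeal {n : ℕ} (Y : Set (Fin n → ℂ)) : Ideal (MvPolynomial (Fin n) ℂ) :=
  Ideal.span {g | ∃ f ∈ vanishingIdeal ℂ Y, f ≠ 0 ∧ topComponent f = g}

/-- The orbit of a point of `ℂⁿ` under the symmetric group permuting coordinates. -/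
def permOrbit {n : ℕ} (P : Fin n → ℂ) : Set (Fin n → ℂ) :=
  {R | ∃ σ : Equiv.Perm (Fin n), R = P ∘ σ}

/-- The degree-`d` graded piece of the quotient `ℂ[x₁,…,xₙ]/I`: the image of the space of
homogeneous polynomials of degree `d` under the quotient map. -/
def gradedPiece {n : ℕ} (I : Ideal (MvPolynomial (Fin n) ℂ)) (d : ℕ) :
    Submodule ℂ (MvPolynomial (Fin n) ℂ ⧸ I) :=
  (homogeneousSubmodule (Fin n) ℂ d).map (Ideal.Quotient.mkₐ ℂ I).toLinearMap

lemma rename_mem_homogeneousSubmodule {n d : ℕ} (σ : Equiv.Perm (Fin n))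
    {f : MvPolynomial (Fin n) ℂ} (hf : f ∈ homogeneousSubmodule (Fin n) ℂ d) :
    rename (⇑σ) f ∈ homogeneousSubmodule (Fin n) ℂ d :=
  (mem_homogeneousSubmodule _ _).mpr ((mem_homogeneousSubmodule _ _).mp hf).rename_isHomogeneous

/-- The union of the `S₃`-orbits of `P = (0,0,4)` and `Q = (1,1,2)` in `ℂ³`. -/
def Yex : Set (Fin 3 → ℂ) := permOrbit ![(0 : ℂ), 0, 4] ∪ permOrbit ![(1 : ℂ), 1, 2]

/-- The coordinate-sum linear functional on `ℂ³`. -/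
def coordSum : (Fin 3 → ℂ) →ₗ[ℂ] ℂ := ∑ i : Fin 3, LinearMap.proj i

/-- The standard (2-dimensional irreducible) representation of `S₃`:
the subspace `{a ∈ ℂ³ : a₀ + a₁ + a₂ = 0}` of the permutation representation `ℂ³`,
on which `σ` acts by `a ↦ a ∘ σ⁻¹`. -/
def stdRep : Submodule ℂ (Fin 3 → ℂ) := LinearMap.ker coordSum

set_option synthInstance.maxHeartbeats 1000000
set_option maxHeartbeats 1000000
set_option linter.unreachableTactic false
set_option linter.unusedTactic false

abbrev R3 := MvPolynomial (Fin 3) ℂ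
def mOf (a b c : ℕ) : Fin 3 →₀ ℕ := Finsupp.equivFunOnFinite.symm ![a, b, c]
@[simp] lemma mOf_apply_0 (a b c : ℕ) : mOf a b c 0 = a := rfl
@[simp] lemma mOf_apply_1 (a b c : ℕ) : mOf a b c 1 = b := rfl
@[simp] lemma mOf_apply_2 (a b c : ℕ) : mOf a b c 2 = c := rfl
lemma eq_mOf (m : Fin 3 →₀ ℕ) : m = mOf (m 0) (m 1) (m 2) := by
  ext i; fin_cases i <;> rfl
lemma mOf_eq_iff {a b c d e f : ℕ} :
    mOf a b c = mOf d e f ↔ a = d ∧ b = e ∧ c = f := by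
  constructor
  · intro h
    exact ⟨by simpa using congrArg (fun m : Fin 3 →₀ ℕ => m 0) h,
      by simpa using congrArg (fun m : Fin 3 →₀ ℕ => m 1) h,
      by simpa using congrArg (fun m : Fin 3 →₀ ℕ => m 2) h⟩
  · rintro ⟨rfl, rfl, rfl⟩; rfl
lemma degree_mOf (a b c : ℕ) : (mOf a b c).degree = a + b + c := by
  rw [Finsupp.degree_eq_sum]
  rw [Fin.sum_univ_three]; rfl
lemma sum_mOf (a b c : ℕ) : ((mOf a b c).sum fun _ e => e) = a + b + c := by
  rw [← degree_mOf]; rfl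
lemma coeff_monomial_mOf (a b c d e f : ℕ) (r : ℂ) :
    coeff (mOf a b c) (monomial (mOf d e f) r) = if d = a ∧ e = b ∧ f = c then r else 0 := by
  rw [coeff_monomial]
  by_cases h : d = a ∧ e = b ∧ f = c
  · rw [if_pos (mOf_eq_iff.mpr h), if_pos h]
  · rw [if_neg (fun hh => h (mOf_eq_iff.mp hh)), if_neg h]


lemma monomial_mOf_eq (a b c : ℕ) (r : ℂ) :
    (monomial (mOf a b c) r : R3) = C r * X 0 ^ a * X 1 ^ b * X 2 ^ c := by
  rw [monomial_eq]
  rw [Finsupp.prod_fintype _ _ (fun i => pow_zero _)]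
  rw [Fin.prod_univ_three]
  simp [mul_assoc]

lemma eval_monomial_mOf (p : Fin 3 → ℂ) (a b c : ℕ) (r : ℂ) :
    eval p (monomial (mOf a b c) r : R3) = r * p 0 ^ a * p 1 ^ b * p 2 ^ c := by
  rw [monomial_mOf_eq]; simp [mul_assoc]

lemma isHomogeneous_monomial_mOf (a b c D : ℕ) (r : ℂ) (h : a + b + c = D) :
    (monomial (mOf a b c) r : R3).IsHomogeneous D :=
  isHomogeneous_monomial r (by rw [degree_mOf, h])

lemma totalDegree_monomial_mOf_le (a b c : ℕ) (r : ℂ) :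
    (monomial (mOf a b c) r : R3).totalDegree ≤ a + b + c := by
  by_cases hr : r = 0
  · simp [hr]
  · rw [totalDegree_monomial _ hr, sum_mOf]

lemma sum_support_eq_degree (d : Fin 3 →₀ ℕ) : (∑ i ∈ d.support, d i) = d.degree := rfl

/-- Representation of a polynomial of total degree ≤ 2 by its 10 coefficients. -/
lemma repr2 (f : R3) (h : f.totalDegree ≤ 2) :
    f = monomial (mOf 0 0 0) (coeff (mOf 0 0 0) f)
      + monomial (mOf 1 0 0) (coeff (mOf 1 0 0) f)
      + monomial (mOf 0 1 0) (coeff (mOf 0 1 0) f)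
      + monomial (mOf 0 0 1) (coeff (mOf 0 0 1) f)
      + monomial (mOf 2 0 0) (coeff (mOf 2 0 0) f)
      + monomial (mOf 0 2 0) (coeff (mOf 0 2 0) f)
      + monomial (mOf 0 0 2) (coeff (mOf 0 0 2) f)
      + monomial (mOf 0 1 1) (coeff (mOf 0 1 1) f)
      + monomial (mOf 1 0 1) (coeff (mOf 1 0 1) f)
      + monomial (mOf 1 1 0) (coeff (mOf 1 1 0) f) := by
  ext m
  simp only [coeff_add]
  rw [eq_mOf m]
  by_cases hdeg : m 0 + m 1 + m 2 ≤ 2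
  · generalize m 0 = a at hdeg ⊢
    generalize m 1 = b at hdeg ⊢
    generalize m 2 = c at hdeg ⊢
    have ha : a ≤ 2 := by omega
    have hb : b ≤ 2 := by omega
    have hc : c ≤ 2 := by omega
    interval_cases a <;> interval_cases b <;> interval_cases c <;>
      first
        | (exfalso; omega)
        | simp [coeff_monomial, mOf_eq_iff]
  · rw [coeff_eq_zero_of_totalDegree_lt
      (by rw [sum_support_eq_degree, degree_mOf]; omega)]
    simp only [coeff_monomial_mOf]
    rw [if_neg (by omega), if_neg (by omega), if_neg (by omega), if_neg (by omega),
      if_neg (by omega), if_neg (by omega), if_neg (by omega), if_neg (by omega),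
      if_neg (by omega), if_neg (by omega)]
    simp

/-! ### The set `Yex` and its points -/

lemma mem_Yex_of_perm_P (σ : Equiv.Perm (Fin 3)) : (![(0:ℂ),0,4] ∘ σ) ∈ Yex :=
  Or.inl ⟨σ, rfl⟩

lemma pt1_mem : (![(0:ℂ),0,4]) ∈ Yex := Or.inl ⟨Equiv.refl _, by funext i; rfl⟩
lemma pt2_mem : (![(0:ℂ),4,0]) ∈ Yex :=
  Or.inl ⟨Equiv.swap 1 2, by funext i; fin_cases i <;> simp [Equiv.swap_apply_def]⟩
lemma pt3_mem : (![(4:ℂ),0,0]) ∈ Yex :=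
  Or.inl ⟨Equiv.swap 0 2, by funext i; fin_cases i <;> simp [Equiv.swap_apply_def]⟩
lemma pt4_mem : (![(1:ℂ),1,2]) ∈ Yex := Or.inr ⟨Equiv.refl _, by funext i; rfl⟩
lemma pt5_mem : (![(1:ℂ),2,1]) ∈ Yex :=
  Or.inr ⟨Equiv.swap 1 2, by funext i; fin_cases i <;> simp [Equiv.swap_apply_def]⟩
lemma pt6_mem : (![(2:ℂ),1,1]) ∈ Yex :=
  Or.inr ⟨Equiv.swap 0 2, by funext i; fin_cases i <;> simp [Equiv.swap_apply_def]⟩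

lemma Yex_constraints {p : Fin 3 → ℂ} (hp : p ∈ Yex) :
    ((∀ i, p i = 0 ∨ p i = 4) ∨ (∀ i, p i = 1 ∨ p i = 2)) ∧ p 0 + p 1 + p 2 = 4 := by
  rcases hp with ⟨σ, rfl⟩ | ⟨σ, rfl⟩
  · constructor
    · left
      intro i
      have : σ i = 0 ∨ σ i = 1 ∨ σ i = 2 := by omega
      rcases this with h | h | h <;> simp [Function.comp, h]
    · have := Equiv.sum_comp σ (![(0:ℂ),0,4])
      rw [Fin.sum_univ_three, Fin.sum_univ_three] at this
      norm_num at this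
      simpa using this.trans (show ![(0:ℂ),0,4] 2 = 4 by rfl)
  · constructor
    · right
      intro i
      have : σ i = 0 ∨ σ i = 1 ∨ σ i = 2 := by omega
      rcases this with h | h | h <;> simp [Function.comp, h]
    · have := Equiv.sum_comp σ (![(1:ℂ),1,2])
      rw [Fin.sum_univ_three, Fin.sum_univ_three] at this
      norm_num at this
      simpa using this.trans (by norm_num : (2:ℂ) + 2 = 4)

/-! ### Evaluation of polynomials of total degree ≤ 2 -/

lemma eval_eq_of_le2 (f : R3) (h : f.totalDegree ≤ 2) (p : Fin 3 → ℂ) :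
    eval p f = coeff (mOf 0 0 0) f + coeff (mOf 1 0 0) f * p 0 + coeff (mOf 0 1 0) f * p 1
      + coeff (mOf 0 0 1) f * p 2 + coeff (mOf 2 0 0) f * p 0 ^ 2
      + coeff (mOf 0 2 0) f * p 1 ^ 2 + coeff (mOf 0 0 2) f * p 2 ^ 2
      + coeff (mOf 0 1 1) f * (p 1 * p 2) + coeff (mOf 1 0 1) f * (p 0 * p 2)
      + coeff (mOf 1 1 0) f * (p 0 * p 1) := by
  conv_lhs => rw [repr2 f h]
  simp only [map_add, eval_monomial_mOf]
  ring

/-! ### The invariant `Qprop` -/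

def Qprop (t : R3) : Prop :=
  coeff (mOf 0 0 0) t = 0 ∧
  (coeff (mOf 1 0 0) t = coeff (mOf 0 1 0) t ∧ coeff (mOf 0 1 0) t = coeff (mOf 0 0 1) t) ∧
  (coeff (mOf 0 1 1) t = coeff (mOf 0 2 0) t + coeff (mOf 0 0 2) t ∧
   coeff (mOf 1 0 1) t = coeff (mOf 2 0 0) t + coeff (mOf 0 0 2) t ∧
   coeff (mOf 1 1 0) t = coeff (mOf 2 0 0) t + coeff (mOf 0 2 0) t)

lemma Qprop_zero : Qprop 0 := by simp [Qprop]

lemma Qprop_add {s t : R3} (hs : Qprop s) (ht : Qprop t) : Qprop (s + t) := by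
  obtain ⟨h1, ⟨h2, h3⟩, h4, h5, h6⟩ := hs
  obtain ⟨g1, ⟨g2, g3⟩, g4, g5, g6⟩ := ht
  refine ⟨?_, ⟨?_, ?_⟩, ?_, ?_, ?_⟩ <;> simp only [coeff_add] <;>
    [linear_combination h1 + g1; linear_combination h2 + g2; linear_combination h3 + g3;
     linear_combination h4 + g4; linear_combination h5 + g5; linear_combination h6 + g6]

lemma Qprop_smul {s : R3} (a : ℂ) (hs : Qprop s) : Qprop (a • s) := by
  obtain ⟨h1, ⟨h2, h3⟩, h4, h5, h6⟩ := hs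
  refine ⟨?_, ⟨?_, ?_⟩, ?_, ?_, ?_⟩ <;> simp only [coeff_smul, smul_eq_mul] <;>
    [rw [h1]; rw [h2]; rw [h3]; rw [h4]; rw [h5]; rw [h6]] <;> ring

lemma single_eq_mOf_0 : (Finsupp.single (0 : Fin 3) 1) = mOf 1 0 0 := by
  ext i; fin_cases i <;> simp [Finsupp.single_apply]
lemma single_eq_mOf_1 : (Finsupp.single (1 : Fin 3) 1) = mOf 0 1 0 := by
  ext i; fin_cases i <;> simp [Finsupp.single_apply]
lemma single_eq_mOf_2 : (Finsupp.single (2 : Fin 3) 1) = mOf 0 0 1 := by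
  ext i; fin_cases i <;> simp [Finsupp.single_apply]

lemma mOf_sub_0 (a b c : ℕ) : mOf a b c - mOf 1 0 0 = mOf (a - 1) b c := by
  ext i; fin_cases i <;> simp [Finsupp.tsub_apply]
lemma mOf_sub_1 (a b c : ℕ) : mOf a b c - mOf 0 1 0 = mOf a (b - 1) c := by
  ext i; fin_cases i <;> simp [Finsupp.tsub_apply]
lemma mOf_sub_2 (a b c : ℕ) : mOf a b c - mOf 0 0 1 = mOf a b (c - 1) := by
  ext i; fin_cases i <;> simp [Finsupp.tsub_apply]

lemma mem_support_mOf_iff (a b c : ℕ) (i : Fin 3) :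
    i ∈ (mOf a b c).support ↔ mOf a b c i ≠ 0 := Finsupp.mem_support_iff

lemma coeff_mul_X_mOf (t : R3) (a b c : ℕ) (i : Fin 3) :
    coeff (mOf a b c) (t * X i) =
      if mOf a b c i ≠ 0 then coeff (mOf a b c - Finsupp.single i 1) t else 0 := by
  rw [coeff_mul_X']
  by_cases h : mOf a b c i ≠ 0
  · rw [if_pos (Finsupp.mem_support_iff.mpr h), if_pos h]
  · rw [if_neg (fun hh => h (Finsupp.mem_support_iff.mp hh)), if_neg h]

lemma mOf_zero : mOf 0 0 0 = 0 := by ext i; fin_cases i <;> rfl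

lemma Qprop_mulX0 {s : R3} (hs : Qprop s) : Qprop (s * X 0) := by
  obtain ⟨h1, ⟨h2, h3⟩, h4, h5, h6⟩ := hs
  have h0 : coeff (0 : Fin 3 →₀ ℕ) s = 0 := by rw [← mOf_zero]; exact h1
  refine ⟨?_, ⟨?_, ?_⟩, ?_, ?_, ?_⟩ <;>
    simp [coeff_mul_X_mOf, single_eq_mOf_0, mOf_sub_0, h0, h1, h2, h3, h4, h5, h6]

lemma Qprop_mulX1 {s : R3} (hs : Qprop s) : Qprop (s * X 1) := by
  obtain ⟨h1, ⟨h2, h3⟩, h4, h5, h6⟩ := hs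
  have h0 : coeff (0 : Fin 3 →₀ ℕ) s = 0 := by rw [← mOf_zero]; exact h1
  refine ⟨?_, ⟨?_, ?_⟩, ?_, ?_, ?_⟩ <;>
    simp [coeff_mul_X_mOf, single_eq_mOf_1, mOf_sub_1, h0, h1, h2, h3, h4, h5, h6]

lemma Qprop_mulX2 {s : R3} (hs : Qprop s) : Qprop (s * X 2) := by
  obtain ⟨h1, ⟨h2, h3⟩, h4, h5, h6⟩ := hs
  have h0 : coeff (0 : Fin 3 →₀ ℕ) s = 0 := by rw [← mOf_zero]; exact h1
  refine ⟨?_, ⟨?_, ?_⟩, ?_, ?_, ?_⟩ <;>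
    simp [coeff_mul_X_mOf, single_eq_mOf_2, mOf_sub_2, h0, h1, h2, h3, h4, h5, h6]

lemma Qprop_mulX {s : R3} (hs : Qprop s) (i : Fin 3) : Qprop (s * X i) := by
  fin_cases i
  · exact Qprop_mulX0 hs
  · exact Qprop_mulX1 hs
  · exact Qprop_mulX2 hs


/-! ### `Qprop` holds for top components of vanishing polynomials -/

lemma coeff_mOf_zero_of_lt (f : R3) (a b c : ℕ) (h : f.totalDegree < a + b + c) :
    coeff (mOf a b c) f = 0 := by
  apply coeff_eq_zero_of_totalDegree_lt
  rw [sum_support_eq_degree, degree_mOf]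
  omega


lemma coeff_topComponent (f : R3) (a b c : ℕ) :
    coeff (mOf a b c) (topComponent f) =
      if a + b + c = f.totalDegree then coeff (mOf a b c) f else 0 := by
  rw [topComponent, coeff_homogeneousComponent, degree_mOf]

lemma Qprop_topComponent (f : R3) (hf : ∀ p ∈ Yex, eval p f = 0) (hf0 : f ≠ 0) :
    Qprop (topComponent f) := by
  rcases le_or_gt 3 f.totalDegree with hD | hD
  · exact ⟨by rw [coeff_topComponent, if_neg (by omega)],
      ⟨by rw [coeff_topComponent, if_neg (by omega), coeff_topComponent, if_neg (by omega)],
       by rw [coeff_topComponent, if_neg (by omega), coeff_topComponent, if_neg (by omega)]⟩,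
      by rw [coeff_topComponent, if_neg (by omega), coeff_topComponent, if_neg (by omega),
        coeff_topComponent, if_neg (by omega)]; ring,
      by rw [coeff_topComponent, if_neg (by omega), coeff_topComponent, if_neg (by omega),
        coeff_topComponent, if_neg (by omega)]; ring,
      by rw [coeff_topComponent, if_neg (by omega), coeff_topComponent, if_neg (by omega),
        coeff_topComponent, if_neg (by omega)]; ring⟩
  · have h2 : f.totalDegree ≤ 2 := by omega
    have E1 := hf _ pt1_mem
    have E2 := hf _ pt2_mem
    have E3 := hf _ pt3_mem
    have E4 := hf _ pt4_mem
    have E5 := hf _ pt5_mem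
    have E6 := hf _ pt6_mem
    rw [eval_eq_of_le2 f h2] at E1 E2 E3 E4 E5 E6
    norm_num [Matrix.cons_val_zero, Matrix.cons_val_one, Matrix.cons_val_two, Matrix.tail_cons, Matrix.head_cons] at E1 E2 E3 E4 E5 E6
    have hD2 : f.totalDegree = 0 ∨ f.totalDegree = 1 ∨ f.totalDegree = 2 := by omega
    rcases hD2 with hd | hd | hd
    · -- impossible: f would be a vanishing constant
      exfalso
      apply hf0
      have z1 : coeff (mOf 1 0 0) f = 0 := coeff_mOf_zero_of_lt f 1 0 0 (by omega)
      have z2 : coeff (mOf 0 1 0) f = 0 := coeff_mOf_zero_of_lt f 0 1 0 (by omega)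
      have z3 : coeff (mOf 0 0 1) f = 0 := coeff_mOf_zero_of_lt f 0 0 1 (by omega)
      have z4 : coeff (mOf 2 0 0) f = 0 := coeff_mOf_zero_of_lt f 2 0 0 (by omega)
      have z5 : coeff (mOf 0 2 0) f = 0 := coeff_mOf_zero_of_lt f 0 2 0 (by omega)
      have z6 : coeff (mOf 0 0 2) f = 0 := coeff_mOf_zero_of_lt f 0 0 2 (by omega)
      have z7 : coeff (mOf 0 1 1) f = 0 := coeff_mOf_zero_of_lt f 0 1 1 (by omega)
      have z8 : coeff (mOf 1 0 1) f = 0 := coeff_mOf_zero_of_lt f 1 0 1 (by omega)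
      have z9 : coeff (mOf 1 1 0) f = 0 := coeff_mOf_zero_of_lt f 1 1 0 (by omega)
      have z0 : coeff (mOf 0 0 0) f = 0 := by
        linear_combination E1 - 4 * z3 - 16 * z6
      rw [repr2 f h2, z0, z1, z2, z3, z4, z5, z6, z7, z8, z9]
      simp
    · have z4 : coeff (mOf 2 0 0) f = 0 := coeff_mOf_zero_of_lt f 2 0 0 (by omega)
      have z5 : coeff (mOf 0 2 0) f = 0 := coeff_mOf_zero_of_lt f 0 2 0 (by omega)
      have z6 : coeff (mOf 0 0 2) f = 0 := coeff_mOf_zero_of_lt f 0 0 2 (by omega)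
      have z7 : coeff (mOf 0 1 1) f = 0 := coeff_mOf_zero_of_lt f 0 1 1 (by omega)
      have z8 : coeff (mOf 1 0 1) f = 0 := coeff_mOf_zero_of_lt f 1 0 1 (by omega)
      have z9 : coeff (mOf 1 1 0) f = 0 := coeff_mOf_zero_of_lt f 1 1 0 (by omega)
      refine ⟨by rw [coeff_topComponent, if_neg (by omega)], ⟨?_, ?_⟩, ?_, ?_, ?_⟩
      · rw [coeff_topComponent, if_pos (by omega), coeff_topComponent, if_pos (by omega)]
        linear_combination (E3 - E2) / 4 - 4 * z4 + 4 * z5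
      · rw [coeff_topComponent, if_pos (by omega), coeff_topComponent, if_pos (by omega)]
        linear_combination (E2 - E1) / 4 - 4 * z5 + 4 * z6
      · rw [coeff_topComponent, if_neg (by omega), coeff_topComponent, if_neg (by omega),
          coeff_topComponent, if_neg (by omega)]; ring
      · rw [coeff_topComponent, if_neg (by omega), coeff_topComponent, if_neg (by omega),
          coeff_topComponent, if_neg (by omega)]; ring
      · rw [coeff_topComponent, if_neg (by omega), coeff_topComponent, if_neg (by omega),
          coeff_topComponent, if_neg (by omega)]; ring
    · refine ⟨by rw [coeff_topComponent, if_neg (by omega)],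
        ⟨by rw [coeff_topComponent, if_neg (by omega), coeff_topComponent, if_neg (by omega)],
         by rw [coeff_topComponent, if_neg (by omega), coeff_topComponent, if_neg (by omega)]⟩,
        ?_, ?_, ?_⟩
      · rw [coeff_topComponent, if_pos (by omega), coeff_topComponent, if_pos (by omega),
          coeff_topComponent, if_pos (by omega)]
        linear_combination (-3/20 : ℂ) * E1 + (-3/20 : ℂ) * E2 + (1/10 : ℂ) * E3
          + (2/5 : ℂ) * E4 + (2/5 : ℂ) * E5 + (-3/5 : ℂ) * E6
      · rw [coeff_topComponent, if_pos (by omega), coeff_topComponent, if_pos (by omega),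
          coeff_topComponent, if_pos (by omega)]
        linear_combination (-3/20 : ℂ) * E1 + (1/10 : ℂ) * E2 + (-3/20 : ℂ) * E3
          + (2/5 : ℂ) * E4 + (-3/5 : ℂ) * E5 + (2/5 : ℂ) * E6
      · rw [coeff_topComponent, if_pos (by omega), coeff_topComponent, if_pos (by omega),
          coeff_topComponent, if_pos (by omega)]
        linear_combination (1/10 : ℂ) * E1 + (-3/20 : ℂ) * E2 + (-3/20 : ℂ) * E3
          + (-3/5 : ℂ) * E4 + (2/5 : ℂ) * E5 + (2/5 : ℂ) * E6


/-! ### topIdeal and Qprop on it -/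


lemma Qprop_mul (a : R3) {x : R3} (hx : Qprop x) : Qprop (a * x) := by
  induction a using MvPolynomial.induction_on with
  | C r => rw [← smul_eq_C_mul]; exact Qprop_smul r hx
  | add p q hp hq => rw [add_mul]; exact Qprop_add hp hq
  | mul_X p n hp =>
      have : p * X n * x = p * x * X n := by ring
      rw [this]; exact Qprop_mulX hp n

lemma Qprop_topIdeal {t : R3} (ht : t ∈ topIdeal Yex) : Qprop t := by
  refine Submodule.span_induction ?_ Qprop_zero (fun x y _ _ hx hy => Qprop_add hx hy)
    (fun a x _ hx => by rw [smul_eq_mul]; exact Qprop_mul a hx) ht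
  rintro g ⟨f, hfI, hf0, rfl⟩
  exact Qprop_topComponent f (fun p hp => hfI p hp) hf0

/-! ### Split lemma for top components -/

lemma topComponent_split {f g h : R3} {D : ℕ} (hf : f = g + h)
    (hg : g.IsHomogeneous D) (hg0 : g ≠ 0) (hh : h.totalDegree < D) :
    f ≠ 0 ∧ f.totalDegree = D ∧ topComponent f = g := by
  have hgD : g.totalDegree = D := hg.totalDegree hg0
  have hcD : homogeneousComponent D f = g := by
    rw [hf, map_add, homogeneousComponent_of_mem hg, if_pos rfl,
      homogeneousComponent_eq_zero _ _ hh, add_zero]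
  have hle : f.totalDegree ≤ D := by
    rw [hf]
    exact le_trans (totalDegree_add g h) (max_le hgD.le hh.le)
  have hge : D ≤ f.totalDegree := by
    by_contra hlt
    push_neg at hlt
    rw [homogeneousComponent_eq_zero _ _ hlt] at hcD
    exact hg0 hcD.symm
  have hD : f.totalDegree = D := le_antisymm hle hge
  refine ⟨?_, hD, ?_⟩
  · rintro rfl
    rw [map_zero] at hcD
    exact hg0 hcD.symm
  · rw [topComponent, hD, hcD]

lemma td_le_max2 {p q : R3} {n : ℕ} (hp : p.totalDegree ≤ n) (hq : q.totalDegree ≤ n) :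
    (p + q).totalDegree ≤ n :=
  le_trans (totalDegree_add p q) (max_le hp hq)

/-! ### Explicit generators of the top ideal -/

/-- `e₁ = x₀ + x₁ + x₂` (homogeneous). -/
def E1p : R3 := monomial (mOf 1 0 0) 1 + monomial (mOf 0 1 0) 1 + monomial (mOf 0 0 1) 1

lemma E1p_mem : E1p ∈ topIdeal Yex := by
  have hvan : (E1p + monomial (mOf 0 0 0) (-4)) ∈ vanishingIdeal ℂ Yex := by
    intro p hp
    change eval p _ = 0
    obtain ⟨hv, hsum⟩ := Yex_constraints hp
    simp only [E1p, map_add, eval_monomial_mOf]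
    linear_combination hsum
  have hsplit := topComponent_split (f := E1p + monomial (mOf 0 0 0) (-4)) rfl
    (((isHomogeneous_monomial_mOf 1 0 0 1 1 rfl).add
      (isHomogeneous_monomial_mOf 0 1 0 1 1 rfl)).add
      (isHomogeneous_monomial_mOf 0 0 1 1 1 rfl))
    (by
      intro h
      have : coeff (mOf 1 0 0) E1p = 1 := by
        simp [E1p, coeff_add, coeff_monomial, mOf_eq_iff]
      rw [h] at this
      simp at this)
    (lt_of_le_of_lt (totalDegree_monomial_mOf_le 0 0 0 (-4)) (by norm_num))
  exact Ideal.subset_span ⟨_, hvan, hsplit.1, hsplit.2.2⟩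


def E2a : R3 := monomial (mOf 2 0 0) (1) + monomial (mOf 1 1 0) (1) + monomial (mOf 1 0 1) (1)

lemma E2a_mem : E2a ∈ topIdeal Yex := by
  have hvan : (E2a + (monomial (mOf 1 0 0) (-4))) ∈ vanishingIdeal ℂ Yex := by
    intro p hp
    change eval p _ = 0
    obtain ⟨hv, hsum⟩ := Yex_constraints hp
    simp only [E2a, map_add, eval_monomial_mOf]
    linear_combination p 0 * hsum
  have hsplit := topComponent_split (f := E2a + (monomial (mOf 1 0 0) (-4))) rfl
    (((isHomogeneous_monomial_mOf 2 0 0 2 (1) rfl).add (isHomogeneous_monomial_mOf 1 1 0 2 (1) rfl)).add (isHomogeneous_monomial_mOf 1 0 1 2 (1) rfl))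
    (by
      intro h
      have : coeff (mOf 2 0 0) E2a = 1 := by
        simp [E2a, coeff_add, coeff_monomial, mOf_eq_iff]
      rw [h] at this
      simp at this)
    (lt_of_lt_of_le (lt_of_le_of_lt (le_trans (totalDegree_monomial_mOf_le 1 0 0 (-4)) (by norm_num)) (by norm_num : (1 : ℕ) < 2)) le_rfl)
  exact Ideal.subset_span ⟨_, hvan, hsplit.1, hsplit.2.2⟩


def E2b : R3 := monomial (mOf 0 2 0) (1) + monomial (mOf 1 1 0) (1) + monomial (mOf 0 1 1) (1)

lemma E2b_mem : E2b ∈ topIdeal Yex := by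
  have hvan : (E2b + (monomial (mOf 0 1 0) (-4))) ∈ vanishingIdeal ℂ Yex := by
    intro p hp
    change eval p _ = 0
    obtain ⟨hv, hsum⟩ := Yex_constraints hp
    simp only [E2b, map_add, eval_monomial_mOf]
    linear_combination p 1 * hsum
  have hsplit := topComponent_split (f := E2b + (monomial (mOf 0 1 0) (-4))) rfl
    (((isHomogeneous_monomial_mOf 0 2 0 2 (1) rfl).add (isHomogeneous_monomial_mOf 1 1 0 2 (1) rfl)).add (isHomogeneous_monomial_mOf 0 1 1 2 (1) rfl))
    (by
      intro h
      have : coeff (mOf 0 2 0) E2b = 1 := by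
        simp [E2b, coeff_add, coeff_monomial, mOf_eq_iff]
      rw [h] at this
      simp at this)
    (lt_of_lt_of_le (lt_of_le_of_lt (le_trans (totalDegree_monomial_mOf_le 0 1 0 (-4)) (by norm_num)) (by norm_num : (1 : ℕ) < 2)) le_rfl)
  exact Ideal.subset_span ⟨_, hvan, hsplit.1, hsplit.2.2⟩


def E2c : R3 := monomial (mOf 0 0 2) (1) + monomial (mOf 1 0 1) (1) + monomial (mOf 0 1 1) (1)

lemma E2c_mem : E2c ∈ topIdeal Yex := by
  have hvan : (E2c + (monomial (mOf 0 0 1) (-4))) ∈ vanishingIdeal ℂ Yex := by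
    intro p hp
    change eval p _ = 0
    obtain ⟨hv, hsum⟩ := Yex_constraints hp
    simp only [E2c, map_add, eval_monomial_mOf]
    linear_combination p 2 * hsum
  have hsplit := topComponent_split (f := E2c + (monomial (mOf 0 0 1) (-4))) rfl
    (((isHomogeneous_monomial_mOf 0 0 2 2 (1) rfl).add (isHomogeneous_monomial_mOf 1 0 1 2 (1) rfl)).add (isHomogeneous_monomial_mOf 0 1 1 2 (1) rfl))
    (by
      intro h
      have : coeff (mOf 0 0 2) E2c = 1 := by
        simp [E2c, coeff_add, coeff_monomial, mOf_eq_iff]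
      rw [h] at this
      simp at this)
    (lt_of_lt_of_le (lt_of_le_of_lt (le_trans (totalDegree_monomial_mOf_le 0 0 1 (-4)) (by norm_num)) (by norm_num : (1 : ℕ) < 2)) le_rfl)
  exact Ideal.subset_span ⟨_, hvan, hsplit.1, hsplit.2.2⟩


def F003 : R3 := monomial (mOf 0 0 3) (1)

lemma F003_mem : F003 ∈ topIdeal Yex := by
  have hvan : (F003 + (monomial (mOf 0 0 0) ((304 : ℂ)/5) + monomial (mOf 1 0 0) (-20) + monomial (mOf 0 1 0) (-20) + monomial (mOf 2 0 0) ((6 : ℂ)/5) + monomial (mOf 0 2 0) ((6 : ℂ)/5) + monomial (mOf 0 0 2) ((-39 : ℂ)/5))) ∈ vanishingIdeal ℂ Yex := by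
    intro p hp
    change eval p _ = 0
    obtain ⟨hv, hsum⟩ := Yex_constraints hp
    simp only [F003, map_add, eval_monomial_mOf]
    rcases hv with h | h <;>
      rcases h 0 with h0 | h0 <;> rcases h 1 with h1 | h1 <;> rcases h 2 with h2 | h2 <;>
      rw [h0, h1, h2] at hsum ⊢ <;> norm_num at hsum <;> norm_num
  have hsplit := topComponent_split (f := F003 + (monomial (mOf 0 0 0) ((304 : ℂ)/5) + monomial (mOf 1 0 0) (-20) + monomial (mOf 0 1 0) (-20) + monomial (mOf 2 0 0) ((6 : ℂ)/5) + monomial (mOf 0 2 0) ((6 : ℂ)/5) + monomial (mOf 0 0 2) ((-39 : ℂ)/5))) rfl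
    (isHomogeneous_monomial_mOf 0 0 3 3 (1) rfl)
    (by
      intro h
      have : coeff (mOf 0 0 3) F003 = 1 := by
        simp [F003, coeff_add, coeff_monomial, mOf_eq_iff]
      rw [h] at this
      simp at this)
    (lt_of_lt_of_le (lt_of_le_of_lt (td_le_max2 (td_le_max2 (td_le_max2 (td_le_max2 (td_le_max2 (le_trans (totalDegree_monomial_mOf_le 0 0 0 ((304 : ℂ)/5)) (by norm_num)) (le_trans (totalDegree_monomial_mOf_le 1 0 0 (-20)) (by norm_num))) (le_trans (totalDegree_monomial_mOf_le 0 1 0 (-20)) (by norm_num))) (le_trans (totalDegree_monomial_mOf_le 2 0 0 ((6 : ℂ)/5)) (by norm_num))) (le_trans (totalDegree_monomial_mOf_le 0 2 0 ((6 : ℂ)/5)) (by norm_num))) (le_trans (totalDegree_monomial_mOf_le 0 0 2 ((-39 : ℂ)/5)) (by norm_num))) (by norm_num : (2 : ℕ) < 3)) le_rfl)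
  exact Ideal.subset_span ⟨_, hvan, hsplit.1, hsplit.2.2⟩


def F012 : R3 := monomial (mOf 0 1 2) (1)

lemma F012_mem : F012 ∈ topIdeal Yex := by
  have hvan : (F012 + (monomial (mOf 0 0 0) ((-152 : ℂ)/5) + monomial (mOf 1 0 0) (12) + monomial (mOf 0 1 0) (8) + monomial (mOf 2 0 0) ((-11 : ℂ)/10) + monomial (mOf 0 2 0) ((-1 : ℂ)/10) + monomial (mOf 0 0 2) ((19 : ℂ)/10))) ∈ vanishingIdeal ℂ Yex := by
    intro p hp
    change eval p _ = 0
    obtain ⟨hv, hsum⟩ := Yex_constraints hp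
    simp only [F012, map_add, eval_monomial_mOf]
    rcases hv with h | h <;>
      rcases h 0 with h0 | h0 <;> rcases h 1 with h1 | h1 <;> rcases h 2 with h2 | h2 <;>
      rw [h0, h1, h2] at hsum ⊢ <;> norm_num at hsum <;> norm_num
  have hsplit := topComponent_split (f := F012 + (monomial (mOf 0 0 0) ((-152 : ℂ)/5) + monomial (mOf 1 0 0) (12) + monomial (mOf 0 1 0) (8) + monomial (mOf 2 0 0) ((-11 : ℂ)/10) + monomial (mOf 0 2 0) ((-1 : ℂ)/10) + monomial (mOf 0 0 2) ((19 : ℂ)/10))) rfl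
    (isHomogeneous_monomial_mOf 0 1 2 3 (1) rfl)
    (by
      intro h
      have : coeff (mOf 0 1 2) F012 = 1 := by
        simp [F012, coeff_add, coeff_monomial, mOf_eq_iff]
      rw [h] at this
      simp at this)
    (lt_of_lt_of_le (lt_of_le_of_lt (td_le_max2 (td_le_max2 (td_le_max2 (td_le_max2 (td_le_max2 (le_trans (totalDegree_monomial_mOf_le 0 0 0 ((-152 : ℂ)/5)) (by norm_num)) (le_trans (totalDegree_monomial_mOf_le 1 0 0 (12)) (by norm_num))) (le_trans (totalDegree_monomial_mOf_le 0 1 0 (8)) (by norm_num))) (le_trans (totalDegree_monomial_mOf_le 2 0 0 ((-11 : ℂ)/10)) (by norm_num))) (le_trans (totalDegree_monomial_mOf_le 0 2 0 ((-1 : ℂ)/10)) (by norm_num))) (le_trans (totalDegree_monomial_mOf_le 0 0 2 ((19 : ℂ)/10)) (by norm_num))) (by norm_num : (2 : ℕ) < 3)) le_rfl)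
  exact Ideal.subset_span ⟨_, hvan, hsplit.1, hsplit.2.2⟩


def F021 : R3 := monomial (mOf 0 2 1) (1)

lemma F021_mem : F021 ∈ topIdeal Yex := by
  have hvan : (F021 + (monomial (mOf 0 0 0) ((8 : ℂ)/5) + monomial (mOf 1 0 0) (4) + monomial (mOf 0 1 0) (-8) + monomial (mOf 2 0 0) ((-11 : ℂ)/10) + monomial (mOf 0 2 0) ((19 : ℂ)/10) + monomial (mOf 0 0 2) ((-1 : ℂ)/10))) ∈ vanishingIdeal ℂ Yex := by
    intro p hp
    change eval p _ = 0
    obtain ⟨hv, hsum⟩ := Yex_constraints hp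
    simp only [F021, map_add, eval_monomial_mOf]
    rcases hv with h | h <;>
      rcases h 0 with h0 | h0 <;> rcases h 1 with h1 | h1 <;> rcases h 2 with h2 | h2 <;>
      rw [h0, h1, h2] at hsum ⊢ <;> norm_num at hsum <;> norm_num
  have hsplit := topComponent_split (f := F021 + (monomial (mOf 0 0 0) ((8 : ℂ)/5) + monomial (mOf 1 0 0) (4) + monomial (mOf 0 1 0) (-8) + monomial (mOf 2 0 0) ((-11 : ℂ)/10) + monomial (mOf 0 2 0) ((19 : ℂ)/10) + monomial (mOf 0 0 2) ((-1 : ℂ)/10))) rfl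
    (isHomogeneous_monomial_mOf 0 2 1 3 (1) rfl)
    (by
      intro h
      have : coeff (mOf 0 2 1) F021 = 1 := by
        simp [F021, coeff_add, coeff_monomial, mOf_eq_iff]
      rw [h] at this
      simp at this)
    (lt_of_lt_of_le (lt_of_le_of_lt (td_le_max2 (td_le_max2 (td_le_max2 (td_le_max2 (td_le_max2 (le_trans (totalDegree_monomial_mOf_le 0 0 0 ((8 : ℂ)/5)) (by norm_num)) (le_trans (totalDegree_monomial_mOf_le 1 0 0 (4)) (by norm_num))) (le_trans (totalDegree_monomial_mOf_le 0 1 0 (-8)) (by norm_num))) (le_trans (totalDegree_monomial_mOf_le 2 0 0 ((-11 : ℂ)/10)) (by norm_num))) (le_trans (totalDegree_monomial_mOf_le 0 2 0 ((19 : ℂ)/10)) (by norm_num))) (le_trans (totalDegree_monomial_mOf_le 0 0 2 ((-1 : ℂ)/10)) (by norm_num))) (by norm_num : (2 : ℕ) < 3)) le_rfl)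
  exact Ideal.subset_span ⟨_, hvan, hsplit.1, hsplit.2.2⟩


def F030 : R3 := monomial (mOf 0 3 0) (1)

lemma F030_mem : F030 ∈ topIdeal Yex := by
  have hvan : (F030 + (monomial (mOf 0 0 0) ((-96 : ℂ)/5) + monomial (mOf 0 1 0) (20) + monomial (mOf 2 0 0) ((6 : ℂ)/5) + monomial (mOf 0 2 0) ((-39 : ℂ)/5) + monomial (mOf 0 0 2) ((6 : ℂ)/5))) ∈ vanishingIdeal ℂ Yex := by
    intro p hp
    change eval p _ = 0
    obtain ⟨hv, hsum⟩ := Yex_constraints hp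
    simp only [F030, map_add, eval_monomial_mOf]
    rcases hv with h | h <;>
      rcases h 0 with h0 | h0 <;> rcases h 1 with h1 | h1 <;> rcases h 2 with h2 | h2 <;>
      rw [h0, h1, h2] at hsum ⊢ <;> norm_num at hsum <;> norm_num
  have hsplit := topComponent_split (f := F030 + (monomial (mOf 0 0 0) ((-96 : ℂ)/5) + monomial (mOf 0 1 0) (20) + monomial (mOf 2 0 0) ((6 : ℂ)/5) + monomial (mOf 0 2 0) ((-39 : ℂ)/5) + monomial (mOf 0 0 2) ((6 : ℂ)/5))) rfl
    (isHomogeneous_monomial_mOf 0 3 0 3 (1) rfl)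
    (by
      intro h
      have : coeff (mOf 0 3 0) F030 = 1 := by
        simp [F030, coeff_add, coeff_monomial, mOf_eq_iff]
      rw [h] at this
      simp at this)
    (lt_of_lt_of_le (lt_of_le_of_lt (td_le_max2 (td_le_max2 (td_le_max2 (td_le_max2 (le_trans (totalDegree_monomial_mOf_le 0 0 0 ((-96 : ℂ)/5)) (by norm_num)) (le_trans (totalDegree_monomial_mOf_le 0 1 0 (20)) (by norm_num))) (le_trans (totalDegree_monomial_mOf_le 2 0 0 ((6 : ℂ)/5)) (by norm_num))) (le_trans (totalDegree_monomial_mOf_le 0 2 0 ((-39 : ℂ)/5)) (by norm_num))) (le_trans (totalDegree_monomial_mOf_le 0 0 2 ((6 : ℂ)/5)) (by norm_num))) (by norm_num : (2 : ℕ) < 3)) le_rfl)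
  exact Ideal.subset_span ⟨_, hvan, hsplit.1, hsplit.2.2⟩


def F102 : R3 := monomial (mOf 1 0 2) (1)

lemma F102_mem : F102 ∈ topIdeal Yex := by
  have hvan : (F102 + (monomial (mOf 0 0 0) ((-152 : ℂ)/5) + monomial (mOf 1 0 0) (8) + monomial (mOf 0 1 0) (12) + monomial (mOf 2 0 0) ((-1 : ℂ)/10) + monomial (mOf 0 2 0) ((-11 : ℂ)/10) + monomial (mOf 0 0 2) ((19 : ℂ)/10))) ∈ vanishingIdeal ℂ Yex := by
    intro p hp
    change eval p _ = 0
    obtain ⟨hv, hsum⟩ := Yex_constraints hp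
    simp only [F102, map_add, eval_monomial_mOf]
    rcases hv with h | h <;>
      rcases h 0 with h0 | h0 <;> rcases h 1 with h1 | h1 <;> rcases h 2 with h2 | h2 <;>
      rw [h0, h1, h2] at hsum ⊢ <;> norm_num at hsum <;> norm_num
  have hsplit := topComponent_split (f := F102 + (monomial (mOf 0 0 0) ((-152 : ℂ)/5) + monomial (mOf 1 0 0) (8) + monomial (mOf 0 1 0) (12) + monomial (mOf 2 0 0) ((-1 : ℂ)/10) + monomial (mOf 0 2 0) ((-11 : ℂ)/10) + monomial (mOf 0 0 2) ((19 : ℂ)/10))) rfl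
    (isHomogeneous_monomial_mOf 1 0 2 3 (1) rfl)
    (by
      intro h
      have : coeff (mOf 1 0 2) F102 = 1 := by
        simp [F102, coeff_add, coeff_monomial, mOf_eq_iff]
      rw [h] at this
      simp at this)
    (lt_of_lt_of_le (lt_of_le_of_lt (td_le_max2 (td_le_max2 (td_le_max2 (td_le_max2 (td_le_max2 (le_trans (totalDegree_monomial_mOf_le 0 0 0 ((-152 : ℂ)/5)) (by norm_num)) (le_trans (totalDegree_monomial_mOf_le 1 0 0 (8)) (by norm_num))) (le_trans (totalDegree_monomial_mOf_le 0 1 0 (12)) (by norm_num))) (le_trans (totalDegree_monomial_mOf_le 2 0 0 ((-1 : ℂ)/10)) (by norm_num))) (le_trans (totalDegree_monomial_mOf_le 0 2 0 ((-11 : ℂ)/10)) (by norm_num))) (le_trans (totalDegree_monomial_mOf_le 0 0 2 ((19 : ℂ)/10)) (by norm_num))) (by norm_num : (2 : ℕ) < 3)) le_rfl)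
  exact Ideal.subset_span ⟨_, hvan, hsplit.1, hsplit.2.2⟩


def F111 : R3 := monomial (mOf 1 1 1) (1)

lemma F111_mem : F111 ∈ topIdeal Yex := by
  have hvan : (F111 + (monomial (mOf 0 0 0) ((-16 : ℂ)/5) + monomial (mOf 2 0 0) ((1 : ℂ)/5) + monomial (mOf 0 2 0) ((1 : ℂ)/5) + monomial (mOf 0 0 2) ((1 : ℂ)/5))) ∈ vanishingIdeal ℂ Yex := by
    intro p hp
    change eval p _ = 0
    obtain ⟨hv, hsum⟩ := Yex_constraints hp
    simp only [F111, map_add, eval_monomial_mOf]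
    rcases hv with h | h <;>
      rcases h 0 with h0 | h0 <;> rcases h 1 with h1 | h1 <;> rcases h 2 with h2 | h2 <;>
      rw [h0, h1, h2] at hsum ⊢ <;> norm_num at hsum <;> norm_num
  have hsplit := topComponent_split (f := F111 + (monomial (mOf 0 0 0) ((-16 : ℂ)/5) + monomial (mOf 2 0 0) ((1 : ℂ)/5) + monomial (mOf 0 2 0) ((1 : ℂ)/5) + monomial (mOf 0 0 2) ((1 : ℂ)/5))) rfl
    (isHomogeneous_monomial_mOf 1 1 1 3 (1) rfl)
    (by
      intro h
      have : coeff (mOf 1 1 1) F111 = 1 := by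
        simp [F111, coeff_add, coeff_monomial, mOf_eq_iff]
      rw [h] at this
      simp at this)
    (lt_of_lt_of_le (lt_of_le_of_lt (td_le_max2 (td_le_max2 (td_le_max2 (le_trans (totalDegree_monomial_mOf_le 0 0 0 ((-16 : ℂ)/5)) (by norm_num)) (le_trans (totalDegree_monomial_mOf_le 2 0 0 ((1 : ℂ)/5)) (by norm_num))) (le_trans (totalDegree_monomial_mOf_le 0 2 0 ((1 : ℂ)/5)) (by norm_num))) (le_trans (totalDegree_monomial_mOf_le 0 0 2 ((1 : ℂ)/5)) (by norm_num))) (by norm_num : (2 : ℕ) < 3)) le_rfl)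
  exact Ideal.subset_span ⟨_, hvan, hsplit.1, hsplit.2.2⟩


def F120 : R3 := monomial (mOf 1 2 0) (1)

lemma F120_mem : F120 ∈ topIdeal Yex := by
  have hvan : (F120 + (monomial (mOf 0 0 0) ((88 : ℂ)/5) + monomial (mOf 1 0 0) (-4) + monomial (mOf 0 1 0) (-12) + monomial (mOf 2 0 0) ((-1 : ℂ)/10) + monomial (mOf 0 2 0) ((19 : ℂ)/10) + monomial (mOf 0 0 2) ((-11 : ℂ)/10))) ∈ vanishingIdeal ℂ Yex := by
    intro p hp
    change eval p _ = 0
    obtain ⟨hv, hsum⟩ := Yex_constraints hp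
    simp only [F120, map_add, eval_monomial_mOf]
    rcases hv with h | h <;>
      rcases h 0 with h0 | h0 <;> rcases h 1 with h1 | h1 <;> rcases h 2 with h2 | h2 <;>
      rw [h0, h1, h2] at hsum ⊢ <;> norm_num at hsum <;> norm_num
  have hsplit := topComponent_split (f := F120 + (monomial (mOf 0 0 0) ((88 : ℂ)/5) + monomial (mOf 1 0 0) (-4) + monomial (mOf 0 1 0) (-12) + monomial (mOf 2 0 0) ((-1 : ℂ)/10) + monomial (mOf 0 2 0) ((19 : ℂ)/10) + monomial (mOf 0 0 2) ((-11 : ℂ)/10))) rfl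
    (isHomogeneous_monomial_mOf 1 2 0 3 (1) rfl)
    (by
      intro h
      have : coeff (mOf 1 2 0) F120 = 1 := by
        simp [F120, coeff_add, coeff_monomial, mOf_eq_iff]
      rw [h] at this
      simp at this)
    (lt_of_lt_of_le (lt_of_le_of_lt (td_le_max2 (td_le_max2 (td_le_max2 (td_le_max2 (td_le_max2 (le_trans (totalDegree_monomial_mOf_le 0 0 0 ((88 : ℂ)/5)) (by norm_num)) (le_trans (totalDegree_monomial_mOf_le 1 0 0 (-4)) (by norm_num))) (le_trans (totalDegree_monomial_mOf_le 0 1 0 (-12)) (by norm_num))) (le_trans (totalDegree_monomial_mOf_le 2 0 0 ((-1 : ℂ)/10)) (by norm_num))) (le_trans (totalDegree_monomial_mOf_le 0 2 0 ((19 : ℂ)/10)) (by norm_num))) (le_trans (totalDegree_monomial_mOf_le 0 0 2 ((-11 : ℂ)/10)) (by norm_num))) (by norm_num : (2 : ℕ) < 3)) le_rfl)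
  exact Ideal.subset_span ⟨_, hvan, hsplit.1, hsplit.2.2⟩


def F201 : R3 := monomial (mOf 2 0 1) (1)

lemma F201_mem : F201 ∈ topIdeal Yex := by
  have hvan : (F201 + (monomial (mOf 0 0 0) ((8 : ℂ)/5) + monomial (mOf 1 0 0) (-8) + monomial (mOf 0 1 0) (4) + monomial (mOf 2 0 0) ((19 : ℂ)/10) + monomial (mOf 0 2 0) ((-11 : ℂ)/10) + monomial (mOf 0 0 2) ((-1 : ℂ)/10))) ∈ vanishingIdeal ℂ Yex := by
    intro p hp
    change eval p _ = 0
    obtain ⟨hv, hsum⟩ := Yex_constraints hp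
    simp only [F201, map_add, eval_monomial_mOf]
    rcases hv with h | h <;>
      rcases h 0 with h0 | h0 <;> rcases h 1 with h1 | h1 <;> rcases h 2 with h2 | h2 <;>
      rw [h0, h1, h2] at hsum ⊢ <;> norm_num at hsum <;> norm_num
  have hsplit := topComponent_split (f := F201 + (monomial (mOf 0 0 0) ((8 : ℂ)/5) + monomial (mOf 1 0 0) (-8) + monomial (mOf 0 1 0) (4) + monomial (mOf 2 0 0) ((19 : ℂ)/10) + monomial (mOf 0 2 0) ((-11 : ℂ)/10) + monomial (mOf 0 0 2) ((-1 : ℂ)/10))) rfl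
    (isHomogeneous_monomial_mOf 2 0 1 3 (1) rfl)
    (by
      intro h
      have : coeff (mOf 2 0 1) F201 = 1 := by
        simp [F201, coeff_add, coeff_monomial, mOf_eq_iff]
      rw [h] at this
      simp at this)
    (lt_of_lt_of_le (lt_of_le_of_lt (td_le_max2 (td_le_max2 (td_le_max2 (td_le_max2 (td_le_max2 (le_trans (totalDegree_monomial_mOf_le 0 0 0 ((8 : ℂ)/5)) (by norm_num)) (le_trans (totalDegree_monomial_mOf_le 1 0 0 (-8)) (by norm_num))) (le_trans (totalDegree_monomial_mOf_le 0 1 0 (4)) (by norm_num))) (le_trans (totalDegree_monomial_mOf_le 2 0 0 ((19 : ℂ)/10)) (by norm_num))) (le_trans (totalDegree_monomial_mOf_le 0 2 0 ((-11 : ℂ)/10)) (by norm_num))) (le_trans (totalDegree_monomial_mOf_le 0 0 2 ((-1 : ℂ)/10)) (by norm_num))) (by norm_num : (2 : ℕ) < 3)) le_rfl)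
  exact Ideal.subset_span ⟨_, hvan, hsplit.1, hsplit.2.2⟩


def F210 : R3 := monomial (mOf 2 1 0) (1)

lemma F210_mem : F210 ∈ topIdeal Yex := by
  have hvan : (F210 + (monomial (mOf 0 0 0) ((88 : ℂ)/5) + monomial (mOf 1 0 0) (-12) + monomial (mOf 0 1 0) (-4) + monomial (mOf 2 0 0) ((19 : ℂ)/10) + monomial (mOf 0 2 0) ((-1 : ℂ)/10) + monomial (mOf 0 0 2) ((-11 : ℂ)/10))) ∈ vanishingIdeal ℂ Yex := by
    intro p hp
    change eval p _ = 0
    obtain ⟨hv, hsum⟩ := Yex_constraints hp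
    simp only [F210, map_add, eval_monomial_mOf]
    rcases hv with h | h <;>
      rcases h 0 with h0 | h0 <;> rcases h 1 with h1 | h1 <;> rcases h 2 with h2 | h2 <;>
      rw [h0, h1, h2] at hsum ⊢ <;> norm_num at hsum <;> norm_num
  have hsplit := topComponent_split (f := F210 + (monomial (mOf 0 0 0) ((88 : ℂ)/5) + monomial (mOf 1 0 0) (-12) + monomial (mOf 0 1 0) (-4) + monomial (mOf 2 0 0) ((19 : ℂ)/10) + monomial (mOf 0 2 0) ((-1 : ℂ)/10) + monomial (mOf 0 0 2) ((-11 : ℂ)/10))) rfl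
    (isHomogeneous_monomial_mOf 2 1 0 3 (1) rfl)
    (by
      intro h
      have : coeff (mOf 2 1 0) F210 = 1 := by
        simp [F210, coeff_add, coeff_monomial, mOf_eq_iff]
      rw [h] at this
      simp at this)
    (lt_of_lt_of_le (lt_of_le_of_lt (td_le_max2 (td_le_max2 (td_le_max2 (td_le_max2 (td_le_max2 (le_trans (totalDegree_monomial_mOf_le 0 0 0 ((88 : ℂ)/5)) (by norm_num)) (le_trans (totalDegree_monomial_mOf_le 1 0 0 (-12)) (by norm_num))) (le_trans (totalDegree_monomial_mOf_le 0 1 0 (-4)) (by norm_num))) (le_trans (totalDegree_monomial_mOf_le 2 0 0 ((19 : ℂ)/10)) (by norm_num))) (le_trans (totalDegree_monomial_mOf_le 0 2 0 ((-1 : ℂ)/10)) (by norm_num))) (le_trans (totalDegree_monomial_mOf_le 0 0 2 ((-11 : ℂ)/10)) (by norm_num))) (by norm_num : (2 : ℕ) < 3)) le_rfl)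
  exact Ideal.subset_span ⟨_, hvan, hsplit.1, hsplit.2.2⟩


def F300 : R3 := monomial (mOf 3 0 0) (1)

lemma F300_mem : F300 ∈ topIdeal Yex := by
  have hvan : (F300 + (monomial (mOf 0 0 0) ((-96 : ℂ)/5) + monomial (mOf 1 0 0) (20) + monomial (mOf 2 0 0) ((-39 : ℂ)/5) + monomial (mOf 0 2 0) ((6 : ℂ)/5) + monomial (mOf 0 0 2) ((6 : ℂ)/5))) ∈ vanishingIdeal ℂ Yex := by
    intro p hp
    change eval p _ = 0
    obtain ⟨hv, hsum⟩ := Yex_constraints hp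
    simp only [F300, map_add, eval_monomial_mOf]
    rcases hv with h | h <;>
      rcases h 0 with h0 | h0 <;> rcases h 1 with h1 | h1 <;> rcases h 2 with h2 | h2 <;>
      rw [h0, h1, h2] at hsum ⊢ <;> norm_num at hsum <;> norm_num
  have hsplit := topComponent_split (f := F300 + (monomial (mOf 0 0 0) ((-96 : ℂ)/5) + monomial (mOf 1 0 0) (20) + monomial (mOf 2 0 0) ((-39 : ℂ)/5) + monomial (mOf 0 2 0) ((6 : ℂ)/5) + monomial (mOf 0 0 2) ((6 : ℂ)/5))) rfl
    (isHomogeneous_monomial_mOf 3 0 0 3 (1) rfl)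
    (by
      intro h
      have : coeff (mOf 3 0 0) F300 = 1 := by
        simp [F300, coeff_add, coeff_monomial, mOf_eq_iff]
      rw [h] at this
      simp at this)
    (lt_of_lt_of_le (lt_of_le_of_lt (td_le_max2 (td_le_max2 (td_le_max2 (td_le_max2 (le_trans (totalDegree_monomial_mOf_le 0 0 0 ((-96 : ℂ)/5)) (by norm_num)) (le_trans (totalDegree_monomial_mOf_le 1 0 0 (20)) (by norm_num))) (le_trans (totalDegree_monomial_mOf_le 2 0 0 ((-39 : ℂ)/5)) (by norm_num))) (le_trans (totalDegree_monomial_mOf_le 0 2 0 ((6 : ℂ)/5)) (by norm_num))) (le_trans (totalDegree_monomial_mOf_le 0 0 2 ((6 : ℂ)/5)) (by norm_num))) (by norm_num : (2 : ℕ) < 3)) le_rfl)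
  exact Ideal.subset_span ⟨_, hvan, hsplit.1, hsplit.2.2⟩


/-! ### All monomials of degree ≥ 3 lie in the top ideal -/

lemma degree_eq_sum3 (m : Fin 3 →₀ ℕ) : m.degree = m 0 + m 1 + m 2 := by
  conv_lhs => rw [eq_mOf m]
  rw [degree_mOf]

lemma cubic_monomial_mem (a b c : ℕ) (h : a + b + c = 3) (r : ℂ) :
    monomial (mOf a b c) r ∈ topIdeal Yex := by
  have hr : monomial (mOf a b c) r = C r * monomial (mOf a b c) 1 := by
    rw [C_mul_monomial, mul_one]
  rw [hr]
  apply Ideal.mul_mem_left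
  have ha : a ≤ 3 := by omega
  have hb : b ≤ 3 := by omega
  have hc : c ≤ 3 := by omega
  interval_cases a <;> interval_cases b <;> interval_cases c <;>
    first
      | (exfalso; omega)
      | exact F003_mem | exact F012_mem | exact F021_mem | exact F030_mem
      | exact F102_mem | exact F111_mem | exact F120_mem | exact F201_mem
      | exact F210_mem | exact F300_mem

lemma monomial_mem_of_ge3 (m : Fin 3 →₀ ℕ) (h : 3 ≤ m.degree) (r : ℂ) :
    monomial m r ∈ topIdeal Yex := by
  have h' : 3 ≤ m 0 + m 1 + m 2 := by rw [← degree_eq_sum3]; exact h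
  obtain ⟨a, b, c, ha, hb, hc, habc⟩ :
      ∃ a b c : ℕ, a ≤ m 0 ∧ b ≤ m 1 ∧ c ≤ m 2 ∧ a + b + c = 3 :=
    ⟨min (m 0) 3, min (m 1) (3 - min (m 0) 3),
      min (m 2) (3 - min (m 0) 3 - min (m 1) (3 - min (m 0) 3)),
      by omega, by omega, by omega, by omega⟩
  have mOf_add : ∀ x y z u v w : ℕ, mOf x y z + mOf u v w = mOf (x + u) (y + v) (z + w) := by
    intro x y z u v w
    ext i
    fin_cases i <;> simp
  have hm : monomial m r
      = monomial (mOf (m 0 - a) (m 1 - b) (m 2 - c)) r * monomial (mOf a b c) 1 := by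
    have hmeq : m = mOf (m 0 - a + a) (m 1 - b + b) (m 2 - c + c) := by
      conv_lhs => rw [eq_mOf m]
      rw [mOf_eq_iff]
      exact ⟨by omega, by omega, by omega⟩
    rw [monomial_mul, mul_one, mOf_add, ← hmeq]
  rw [hm]
  exact Ideal.mul_mem_left _ _ (cubic_monomial_mem a b c habc 1)

lemma homog_mem_of_ge3 {f : R3} {d : ℕ} (hf : f.IsHomogeneous d) (hd : 3 ≤ d) :
    f ∈ topIdeal Yex := by
  rw [f.as_sum]
  apply Ideal.sum_mem
  intro m hm
  apply monomial_mem_of_ge3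
  have := hf (mem_support_iff.mp hm)
  rw [Pi.one_def, ← Finsupp.degree_eq_weight_one] at this
  omega

/-! ### The top ideal is invariant under permutations of the variables -/

lemma exists_top_coeff {f : R3} (hf : f ≠ 0) :
    ∃ m ∈ f.support, (m.sum fun _ e => e) = f.totalDegree := by
  obtain ⟨m, hm, hm'⟩ := f.support.exists_mem_eq_sup
    (Finset.nonempty_iff_ne_empty.mpr (mt support_eq_empty.mp hf)) (fun s => s.sum fun _ e => e)
  exact ⟨m, hm, by rw [totalDegree, hm']⟩

lemma topComponent_ne_zero {f : R3} (hf : f ≠ 0) : topComponent f ≠ 0 := by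
  obtain ⟨m, hm, hdeg⟩ := exists_top_coeff hf
  intro h
  have : coeff m (topComponent f) = coeff m f := by
    rw [topComponent, coeff_homogeneousComponent, if_pos]
    rw [Finsupp.degree]
    exact hdeg
  rw [h, coeff_zero] at this
  exact (mem_support_iff.mp hm) this.symm

lemma totalDegree_sub_top_lt {f : R3} (hD : 0 < f.totalDegree) :
    (f - topComponent f).totalDegree < f.totalDegree := by
  rw [totalDegree, Finset.sup_lt_iff hD]
  intro m hm
  have hco : coeff m (f - topComponent f) ≠ 0 := mem_support_iff.mp hm
  rw [coeff_sub, topComponent, coeff_homogeneousComponent] at hco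
  by_cases hd : m.degree = f.totalDegree
  · rw [if_pos hd, sub_self] at hco; exact absurd rfl hco
  · have hmf : m ∈ f.support := by
      rw [if_neg hd, sub_zero] at hco
      exact mem_support_iff.mpr hco
    have := le_totalDegree hmf
    have hdeg : (m.sum fun _ e => e) = m.degree := rfl
    omega

lemma topComponent_rename (σ : Equiv.Perm (Fin 3)) {f : R3} (hf0 : f ≠ 0)
    (hD : 0 < f.totalDegree) :
    topComponent (rename (⇑σ) f) = rename (⇑σ) (topComponent f) := by
  have hsplit := topComponent_split
    (f := rename (⇑σ) f) (g := rename (⇑σ) (topComponent f))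
    (h := rename (⇑σ) (f - topComponent f)) (D := f.totalDegree)
    (by rw [← map_add]; congr 1; ring)
    ((homogeneousComponent_isHomogeneous _ f).rename_isHomogeneous)
    (fun h => topComponent_ne_zero hf0 (rename_injective _ σ.injective (by simpa using h)))
    (lt_of_le_of_lt (totalDegree_rename_le _ _) (totalDegree_sub_top_lt hD))
  exact hsplit.2.2

lemma totalDegree_pos_of_vanishing {f : R3} (hf : ∀ p ∈ Yex, eval p f = 0) (hf0 : f ≠ 0) :
    0 < f.totalDegree := by
  rcases Nat.eq_zero_or_pos f.totalDegree with h | h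
  swap
  · exact h
  · exfalso
    apply hf0
    have h2 : f.totalDegree ≤ 2 := by omega
    have E1 := hf _ pt1_mem
    rw [eval_eq_of_le2 f h2] at E1
    norm_num [Matrix.cons_val_zero, Matrix.cons_val_one, Matrix.cons_val_two, Matrix.tail_cons, Matrix.head_cons] at E1
    have z1 : coeff (mOf 1 0 0) f = 0 := coeff_mOf_zero_of_lt f 1 0 0 (by omega)
    have z2 : coeff (mOf 0 1 0) f = 0 := coeff_mOf_zero_of_lt f 0 1 0 (by omega)
    have z3 : coeff (mOf 0 0 1) f = 0 := coeff_mOf_zero_of_lt f 0 0 1 (by omega)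
    have z4 : coeff (mOf 2 0 0) f = 0 := coeff_mOf_zero_of_lt f 2 0 0 (by omega)
    have z5 : coeff (mOf 0 2 0) f = 0 := coeff_mOf_zero_of_lt f 0 2 0 (by omega)
    have z6 : coeff (mOf 0 0 2) f = 0 := coeff_mOf_zero_of_lt f 0 0 2 (by omega)
    have z7 : coeff (mOf 0 1 1) f = 0 := coeff_mOf_zero_of_lt f 0 1 1 (by omega)
    have z8 : coeff (mOf 1 0 1) f = 0 := coeff_mOf_zero_of_lt f 1 0 1 (by omega)
    have z9 : coeff (mOf 1 1 0) f = 0 := coeff_mOf_zero_of_lt f 1 1 0 (by omega)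
    have z0 : coeff (mOf 0 0 0) f = 0 := by linear_combination E1 - 4 * z3 - 16 * z6
    rw [repr2 f h2, z0, z1, z2, z3, z4, z5, z6, z7, z8, z9]
    simp

lemma mem_Yex_comp {p : Fin 3 → ℂ} (hp : p ∈ Yex) (σ : Equiv.Perm (Fin 3)) :
    (p ∘ σ) ∈ Yex := by
  rcases hp with ⟨τ, rfl⟩ | ⟨τ, rfl⟩
  · exact Or.inl ⟨σ.trans τ, rfl⟩
  · exact Or.inr ⟨σ.trans τ, rfl⟩

lemma topIdeal_rename (σ : Equiv.Perm (Fin 3)) {t : R3} (ht : t ∈ topIdeal Yex) :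
    rename (⇑σ) t ∈ topIdeal Yex := by
  refine Submodule.span_induction ?_ (by simp) ?_ ?_ ht
  · rintro g ⟨f, hfI, hf0, rfl⟩
    have hvan : ∀ p ∈ Yex, eval p f = 0 := fun p hp => hfI p hp
    have hD := totalDegree_pos_of_vanishing hvan hf0
    rw [← topComponent_rename σ hf0 hD]
    apply Ideal.subset_span
    refine ⟨rename (⇑σ) f, ?_, ?_, rfl⟩
    · intro p hp
      change eval p _ = 0
      rw [eval_rename]
      exact hvan _ (mem_Yex_comp hp σ)
    · intro h
      exact hf0 (rename_injective _ σ.injective (by simpa using h))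
  · intro x y _ _ hx hy
    rw [map_add]
    exact Ideal.add_mem _ hx hy
  · intro a x _ hx
    rw [smul_eq_mul, map_mul]
    exact Ideal.mul_mem_left _ _ hx


/-! ### Homogeneous representation lemmas -/

lemma coeff_zero_of_isHomogeneous_ne {f : R3} {d : ℕ} (hf : f.IsHomogeneous d)
    {m : Fin 3 →₀ ℕ} (hm : m.degree ≠ d) : coeff m f = 0 := by
  by_contra h
  exact hm (by rw [Finsupp.degree_eq_weight_one]; exact hf h)

lemma repr_homog0 {f : R3} (hf : f.IsHomogeneous 0) :
    f = monomial (mOf 0 0 0) (coeff (mOf 0 0 0) f) := by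
  ext m
  rw [eq_mOf m]
  by_cases hdeg : m 0 = 0 ∧ m 1 = 0 ∧ m 2 = 0
  · obtain ⟨h0, h1, h2⟩ := hdeg
    rw [h0, h1, h2]
    simp [coeff_monomial, mOf_eq_iff]
  · rw [coeff_zero_of_isHomogeneous_ne hf (by rw [degree_mOf]; omega)]
    rw [coeff_monomial, if_neg (fun h => hdeg (by
      obtain ⟨h1, h2, h3⟩ := mOf_eq_iff.mp h
      exact ⟨h1.symm, h2.symm, h3.symm⟩))]

lemma repr_homog1 {f : R3} (hf : f.IsHomogeneous 1) :
    f = monomial (mOf 1 0 0) (coeff (mOf 1 0 0) f)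
      + monomial (mOf 0 1 0) (coeff (mOf 0 1 0) f)
      + monomial (mOf 0 0 1) (coeff (mOf 0 0 1) f) := by
  ext m
  simp only [coeff_add]
  rw [eq_mOf m]
  by_cases hdeg : m 0 + m 1 + m 2 = 1
  · generalize m 0 = a at hdeg ⊢
    generalize m 1 = b at hdeg ⊢
    generalize m 2 = c at hdeg ⊢
    have ha : a ≤ 1 := by omega
    have hb : b ≤ 1 := by omega
    have hc : c ≤ 1 := by omega
    interval_cases a <;> interval_cases b <;> interval_cases c <;>
      first
        | (exfalso; omega)
        | simp [coeff_monomial, mOf_eq_iff]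
  · rw [coeff_zero_of_isHomogeneous_ne hf (by rw [degree_mOf]; omega)]
    simp only [coeff_monomial_mOf]
    rw [if_neg (by omega), if_neg (by omega), if_neg (by omega)]
    simp

lemma repr_homog2 {f : R3} (hf : f.IsHomogeneous 2) :
    f = monomial (mOf 2 0 0) (coeff (mOf 2 0 0) f)
      + monomial (mOf 0 2 0) (coeff (mOf 0 2 0) f)
      + monomial (mOf 0 0 2) (coeff (mOf 0 0 2) f)
      + monomial (mOf 0 1 1) (coeff (mOf 0 1 1) f)
      + monomial (mOf 1 0 1) (coeff (mOf 1 0 1) f)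
      + monomial (mOf 1 1 0) (coeff (mOf 1 1 0) f) := by
  ext m
  simp only [coeff_add]
  rw [eq_mOf m]
  by_cases hdeg : m 0 + m 1 + m 2 = 2
  · generalize m 0 = a at hdeg ⊢
    generalize m 1 = b at hdeg ⊢
    generalize m 2 = c at hdeg ⊢
    have ha : a ≤ 2 := by omega
    have hb : b ≤ 2 := by omega
    have hc : c ≤ 2 := by omega
    interval_cases a <;> interval_cases b <;> interval_cases c <;>
      first
        | (exfalso; omega)
        | simp [coeff_monomial, mOf_eq_iff]
  · rw [coeff_zero_of_isHomogeneous_ne hf (by rw [degree_mOf]; omega)]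
    simp only [coeff_monomial_mOf]
    rw [if_neg (by omega), if_neg (by omega), if_neg (by omega), if_neg (by omega),
      if_neg (by omega), if_neg (by omega)]
    simp

/-! ### singles as mOf -/

lemma single2_eq_mOf_0 : (Finsupp.single (0 : Fin 3) 2) = mOf 2 0 0 := by
  ext i; fin_cases i <;> simp [Finsupp.single_apply]
lemma single2_eq_mOf_1 : (Finsupp.single (1 : Fin 3) 2) = mOf 0 2 0 := by
  ext i; fin_cases i <;> simp [Finsupp.single_apply]
lemma single2_eq_mOf_2 : (Finsupp.single (2 : Fin 3) 2) = mOf 0 0 2 := by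
  ext i; fin_cases i <;> simp [Finsupp.single_apply]


/-! ### The lift maps -/

def mkQ : R3 →ₗ[ℂ] (R3 ⧸ topIdeal Yex) := (Ideal.Quotient.mkₐ ℂ (topIdeal Yex)).toLinearMap

def L1map : (Fin 3 → ℂ) →ₗ[ℂ] R3 :=
  ∑ i : Fin 3, (monomial (Finsupp.single i 1)).comp (LinearMap.proj i)

def L2map : ((Fin 3 → ℂ) × ℂ) →ₗ[ℂ] R3 :=
  ∑ i : Fin 3, (monomial (Finsupp.single i 2)).comp
    ((LinearMap.proj i).comp (LinearMap.fst ℂ (Fin 3 → ℂ) ℂ) + LinearMap.snd ℂ (Fin 3 → ℂ) ℂ)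

lemma L1map_apply (v : Fin 3 → ℂ) :
    L1map v = monomial (mOf 1 0 0) (v 0) + monomial (mOf 0 1 0) (v 1)
      + monomial (mOf 0 0 1) (v 2) := by
  simp [L1map, Fin.sum_univ_three, single_eq_mOf_0, single_eq_mOf_1, single_eq_mOf_2]

lemma L2map_apply (v : Fin 3 → ℂ) (w : ℂ) :
    L2map (v, w) = monomial (mOf 2 0 0) (v 0 + w) + monomial (mOf 0 2 0) (v 1 + w)
      + monomial (mOf 0 0 2) (v 2 + w) := by
  simp [L2map, Fin.sum_univ_three, single2_eq_mOf_0, single2_eq_mOf_1, single2_eq_mOf_2]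

lemma L1map_homog (v : Fin 3 → ℂ) : L1map v ∈ homogeneousSubmodule (Fin 3) ℂ 1 := by
  rw [L1map_apply]
  exact ((isHomogeneous_monomial_mOf 1 0 0 1 _ rfl).add
    (isHomogeneous_monomial_mOf 0 1 0 1 _ rfl)).add (isHomogeneous_monomial_mOf 0 0 1 1 _ rfl)

lemma L2map_homog (v : Fin 3 → ℂ) (w : ℂ) :
    L2map (v, w) ∈ homogeneousSubmodule (Fin 3) ℂ 2 := by
  rw [L2map_apply]
  exact ((isHomogeneous_monomial_mOf 2 0 0 2 _ rfl).add
    (isHomogeneous_monomial_mOf 0 2 0 2 _ rfl)).add (isHomogeneous_monomial_mOf 0 0 2 2 _ rfl)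

lemma coordSum_apply (v : Fin 3 → ℂ) : coordSum v = v 0 + v 1 + v 2 := by
  simp [coordSum, Fin.sum_univ_three]

/-! ### The maps `B₀, B₁, B₂` into the graded pieces -/

def B0 : ℂ →ₗ[ℂ] gradedPiece (topIdeal Yex) 0 :=
  LinearMap.codRestrict _ (mkQ ∘ₗ Algebra.linearMap ℂ R3)
    (fun z => ⟨C z, (mem_homogeneousSubmodule _ _).mpr (isHomogeneous_C _ _), rfl⟩)

def B1 : stdRep →ₗ[ℂ] gradedPiece (topIdeal Yex) 1 :=
  LinearMap.codRestrict _ (mkQ ∘ₗ L1map ∘ₗ stdRep.subtype)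
    (fun v => ⟨L1map v.1, L1map_homog v.1, rfl⟩)

def B2 : (stdRep × ℂ) →ₗ[ℂ] gradedPiece (topIdeal Yex) 2 :=
  LinearMap.codRestrict _ (mkQ ∘ₗ L2map ∘ₗ (LinearMap.prodMap stdRep.subtype LinearMap.id))
    (fun p => ⟨L2map (p.1.1, p.2), L2map_homog p.1.1 p.2, rfl⟩)

lemma B0_val (z : ℂ) : (B0 z : R3 ⧸ topIdeal Yex) = mkQ (C z) := rfl
lemma B1_val (v : stdRep) : (B1 v : R3 ⧸ topIdeal Yex) = mkQ (L1map v.1) := rfl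
lemma B2_val (p : stdRep × ℂ) : (B2 p : R3 ⧸ topIdeal Yex) = mkQ (L2map (p.1.1, p.2)) := rfl

lemma mkQ_eq_zero_iff (f : R3) : mkQ f = 0 ↔ f ∈ topIdeal Yex := by
  rw [show (mkQ f) = Ideal.Quotient.mk (topIdeal Yex) f from rfl,
    Ideal.Quotient.eq_zero_iff_mem]

lemma mkQ_eq_iff (f g : R3) : mkQ f = mkQ g ↔ f - g ∈ topIdeal Yex := by
  constructor
  · intro h
    rw [← mkQ_eq_zero_iff, map_sub, h, sub_self]
  · intro h
    have := (mkQ_eq_zero_iff (f - g)).mpr h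
    rw [map_sub, sub_eq_zero] at this
    exact this

/-! ### Injectivity of the `B` maps -/

lemma B0_injective : Function.Injective B0 := by
  intro x y h
  have h0 : B0 (x - y) = 0 := by rw [map_sub, h, sub_self]
  have hval : mkQ (C (x - y)) = 0 := by
    rw [← B0_val]
    exact congrArg Subtype.val h0
  have hQ := Qprop_topIdeal ((mkQ_eq_zero_iff _).mp hval)
  have : coeff (mOf 0 0 0) (C (x - y) : R3) = x - y := by
    rw [mOf_zero]
    exact coeff_zero_C _
  rw [hQ.1] at this
  exact sub_eq_zero.mp this.symm

lemma B1_injective : Function.Injective B1 := by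
  intro x y h
  have h0 : B1 (x - y) = 0 := by rw [map_sub, h, sub_self]
  have hval : mkQ (L1map (x.1 - y.1)) = 0 := congrArg Subtype.val h0
  have hQ := Qprop_topIdeal ((mkQ_eq_zero_iff _).mp hval)
  set v := x.1 - y.1 with hv
  have c1 : coeff (mOf 1 0 0) (L1map v) = v 0 := by
    simp [L1map_apply, coeff_monomial, mOf_eq_iff]
  have c2 : coeff (mOf 0 1 0) (L1map v) = v 1 := by
    simp [L1map_apply, coeff_monomial, mOf_eq_iff]
  have c3 : coeff (mOf 0 0 1) (L1map v) = v 2 := by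
    simp [L1map_apply, coeff_monomial, mOf_eq_iff]
  have e1 : v 0 = v 1 := by rw [← c1, ← c2]; exact hQ.2.1.1
  have e2 : v 1 = v 2 := by rw [← c2, ← c3]; exact hQ.2.1.2
  have hsum : v 0 + v 1 + v 2 = 0 := by
    rw [← coordSum_apply]
    have : (x - y : stdRep).1 = v := rfl
    rw [← this]
    exact (x - y).2
  have hv0 : v 0 = 0 := by linear_combination hsum / 3 + e1 / 3 + (e1 + e2) / 3
  have hv1 : v 1 = 0 := by linear_combination hv0 - e1
  have hv2 : v 2 = 0 := by linear_combination hv1 - e2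
  have hx : v = 0 := by
    funext i
    fin_cases i
    · exact hv0
    · exact hv1
    · exact hv2
  exact Subtype.ext (sub_eq_zero.mp hx)

lemma B2_injective : Function.Injective B2 := by
  intro x y h
  have h0 : B2 (x - y) = 0 := by rw [map_sub, h, sub_self]
  have hval : mkQ (L2map (x.1.1 - y.1.1, x.2 - y.2)) = 0 := congrArg Subtype.val h0
  have hQ := Qprop_topIdeal ((mkQ_eq_zero_iff _).mp hval)
  set v := x.1.1 - y.1.1 with hv
  set w := x.2 - y.2 with hw
  have c1 : coeff (mOf 2 0 0) (L2map (v, w)) = v 0 + w := by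
    simp [L2map_apply, coeff_monomial, mOf_eq_iff]
  have c2 : coeff (mOf 0 2 0) (L2map (v, w)) = v 1 + w := by
    simp [L2map_apply, coeff_monomial, mOf_eq_iff]
  have c3 : coeff (mOf 0 0 2) (L2map (v, w)) = v 2 + w := by
    simp [L2map_apply, coeff_monomial, mOf_eq_iff]
  have d1 : coeff (mOf 0 1 1) (L2map (v, w)) = 0 := by
    simp [L2map_apply, coeff_monomial, mOf_eq_iff]
  have d2 : coeff (mOf 1 0 1) (L2map (v, w)) = 0 := by
    simp [L2map_apply, coeff_monomial, mOf_eq_iff]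
  have d3 : coeff (mOf 1 1 0) (L2map (v, w)) = 0 := by
    simp [L2map_apply, coeff_monomial, mOf_eq_iff]
  have eA : (0 : ℂ) = (v 1 + w) + (v 2 + w) := by
    rw [← c2, ← c3, ← d1]; exact hQ.2.2.1
  have eB : (0 : ℂ) = (v 0 + w) + (v 2 + w) := by
    rw [← c1, ← c3, ← d2]; exact hQ.2.2.2.1
  have eC : (0 : ℂ) = (v 0 + w) + (v 1 + w) := by
    rw [← c1, ← c2, ← d3]; exact hQ.2.2.2.2
  have hsum : v 0 + v 1 + v 2 = 0 := by
    rw [← coordSum_apply]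
    exact (x.1 - y.1).2
  have hw0 : w = 0 := by linear_combination - (eA + eB + eC) / 6 - hsum / 3
  have hv0 : v 0 = 0 := by linear_combination hsum + eA + 2 * hw0
  have hv1 : v 1 = 0 := by linear_combination hsum + eB + 2 * hw0
  have hv2 : v 2 = 0 := by linear_combination hsum + eC + 2 * hw0
  have hx : v = 0 := by
    funext i
    fin_cases i
    · exact hv0
    · exact hv1
    · exact hv2
  have : x.1 = y.1 := Subtype.ext (sub_eq_zero.mp hx)
  exact Prod.ext this (sub_eq_zero.mp hw0)

/-! ### Surjectivity of the `B` maps -/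

lemma eq_C_of_homog0 {f : R3} (hf : f.IsHomogeneous 0) : f = C (coeff (mOf 0 0 0) f) := by
  conv_lhs => rw [repr_homog0 hf]
  rw [show mOf 0 0 0 = 0 from mOf_zero, monomial_zero']

lemma B0_surjective : Function.Surjective B0 := by
  rintro ⟨x, hx⟩
  obtain ⟨f, hf, hfx⟩ := hx
  refine ⟨coeff (mOf 0 0 0) f, Subtype.ext ?_⟩
  show mkQ (C (coeff (mOf 0 0 0) f)) = x
  rw [← hfx]
  exact congrArg mkQ (eq_C_of_homog0 ((mem_homogeneousSubmodule _ _).mp hf)).symm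

lemma B1_surjective : Function.Surjective B1 := by
  rintro ⟨x, hx⟩
  obtain ⟨f, hf, hfx⟩ := hx
  have hf' : f.IsHomogeneous 1 := (mem_homogeneousSubmodule _ _).mp hf
  set t0 := coeff (mOf 1 0 0) f with ht0
  set t1 := coeff (mOf 0 1 0) f with ht1
  set t2 := coeff (mOf 0 0 1) f with ht2
  set v : Fin 3 → ℂ := ![t0 - (t0 + t1 + t2)/3, t1 - (t0 + t1 + t2)/3, t2 - (t0 + t1 + t2)/3]
    with hvdef
  have hv : v ∈ stdRep := by
    rw [stdRep, LinearMap.mem_ker, coordSum_apply]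
    simp only [hvdef, Matrix.cons_val_zero, Matrix.cons_val_one, Matrix.head_cons,
      Matrix.cons_val_two, Matrix.tail_cons]
    ring
  refine ⟨⟨v, hv⟩, Subtype.ext ?_⟩
  show mkQ (L1map v) = x
  rw [← hfx]
  show mkQ (L1map v) = mkQ f
  rw [mkQ_eq_iff]
  have hident : L1map v - f = (-((t0 + t1 + t2)/3)) • E1p := by
    rw [L1map_apply, repr_homog1 hf']
    simp only [hvdef, Matrix.cons_val_zero, Matrix.cons_val_one, Matrix.head_cons,
      Matrix.cons_val_two, Matrix.tail_cons, ← ht0, ← ht1, ← ht2]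
    rw [smul_eq_C_mul]
    simp only [E1p, monomial_mOf_eq, map_sub, map_add, map_neg, C_1]
    ring
  rw [hident]
  rw [smul_eq_C_mul]
  exact Ideal.mul_mem_left _ _ E1p_mem

lemma B2_surjective : Function.Surjective B2 := by
  rintro ⟨x, hx⟩
  obtain ⟨f, hf, hfx⟩ := hx
  have hf' : f.IsHomogeneous 2 := (mem_homogeneousSubmodule _ _).mp hf
  set a0 := coeff (mOf 2 0 0) f with ha0
  set a1 := coeff (mOf 0 2 0) f with ha1
  set a2 := coeff (mOf 0 0 2) f with ha2
  set c0 := coeff (mOf 0 1 1) f with hc0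
  set c1 := coeff (mOf 1 0 1) f with hc1
  set c2 := coeff (mOf 1 1 0) f with hc2
  set h := (c0 + c1 + c2)/2 with hh
  have hh0 : 2 * h - (c0 + c1 + c2) = 0 := by rw [hh]; ring
  set w := (a0 + a1 + a2)/3 + (c0 + c1 + c2)/3 - h with hwdef
  set v : Fin 3 → ℂ := ![a0 + c0 - h - w, a1 + c1 - h - w, a2 + c2 - h - w] with hvdef
  have hv : v ∈ stdRep := by
    rw [stdRep, LinearMap.mem_ker, coordSum_apply]
    simp only [hvdef, Matrix.cons_val_zero, Matrix.cons_val_one, Matrix.head_cons,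
      Matrix.cons_val_two, Matrix.tail_cons, hwdef]
    ring
  refine ⟨(⟨v, hv⟩, w), Subtype.ext ?_⟩
  show mkQ (L2map (v, w)) = x
  rw [← hfx]
  show mkQ (L2map (v, w)) = mkQ f
  rw [mkQ_eq_iff]
  have hident : L2map (v, w) - f
      = (-(a0 - (a0 + c0 - h))) • E2a + (-(a1 - (a1 + c1 - h))) • E2b
        + (-(a2 - (a2 + c2 - h))) • E2c
        + (X 1 * X 2 + X 0 * X 2 + X 0 * X 1) * C (2 * h - (c0 + c1 + c2)) := by
    rw [L2map_apply, repr_homog2 hf']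
    simp only [hvdef, Matrix.cons_val_zero, Matrix.cons_val_one, Matrix.head_cons,
      Matrix.cons_val_two, Matrix.tail_cons, ← ha0, ← ha1, ← ha2, ← hc0, ← hc1, ← hc2]
    rw [smul_eq_C_mul, smul_eq_C_mul, smul_eq_C_mul]
    simp only [E2a, E2b, E2c, monomial_mOf_eq, map_sub, map_add, map_neg, map_mul, map_ofNat, C_1]
    ring
  rw [hident, hh0, map_zero, mul_zero, add_zero]
  refine Submodule.add_mem _ (Submodule.add_mem _ ?_ ?_) ?_ <;> rw [smul_eq_C_mul] <;>
    first
      | exact Ideal.mul_mem_left _ _ E2a_mem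
      | exact Ideal.mul_mem_left _ _ E2b_mem
      | exact Ideal.mul_mem_left _ _ E2c_mem

/-! ### Equivariance helpers -/

lemma L1map_sum (v : Fin 3 → ℂ) :
    L1map v = ∑ i : Fin 3, monomial (Finsupp.single i 1) (v i) := by
  simp [L1map]

lemma L2map_sum (v : Fin 3 → ℂ) (w : ℂ) :
    L2map (v, w) = ∑ i : Fin 3, monomial (Finsupp.single i 2) (v i + w) := by
  simp [L2map]

lemma rename_L1map (σ : Equiv.Perm (Fin 3)) (v : Fin 3 → ℂ) :
    rename (⇑σ) (L1map v) = L1map (v ∘ ⇑σ⁻¹) := by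
  rw [L1map_sum, L1map_sum, map_sum]
  rw [← Equiv.sum_comp σ (fun j => monomial (Finsupp.single j 1) ((v ∘ ⇑σ⁻¹) j))]
  refine Finset.sum_congr rfl fun i _ => ?_
  rw [rename_monomial, Finsupp.mapDomain_single]
  simp

lemma rename_L2map (σ : Equiv.Perm (Fin 3)) (v : Fin 3 → ℂ) (w : ℂ) :
    rename (⇑σ) (L2map (v, w)) = L2map (v ∘ ⇑σ⁻¹, w) := by
  rw [L2map_sum, L2map_sum, map_sum]
  rw [← Equiv.sum_comp σ (fun j => monomial (Finsupp.single j 2) ((v ∘ ⇑σ⁻¹) j + w))]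
  refine Finset.sum_congr rfl fun i _ => ?_
  rw [rename_monomial, Finsupp.mapDomain_single]
  simp

lemma comp_inv_mem_stdRep (y : Fin 3 → ℂ) (hy : y ∈ stdRep) (σ : Equiv.Perm (Fin 3)) :
    (y ∘ ⇑σ⁻¹) ∈ stdRep := by
  rw [stdRep, LinearMap.mem_ker, coordSum_apply] at hy ⊢
  have := Equiv.sum_comp σ⁻¹ y
  rw [Fin.sum_univ_three, Fin.sum_univ_three] at this
  rw [show (y ∘ ⇑σ⁻¹) 0 + (y ∘ ⇑σ⁻¹) 1 + (y ∘ ⇑σ⁻¹) 2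
      = y (σ⁻¹ 0) + y (σ⁻¹ 1) + y (σ⁻¹ 2) from rfl, this, hy]

/-! ### Graded pieces vanish in degrees ≥ 3 -/

lemma gradedPiece_eq_bot {d : ℕ} (hd : 3 ≤ d) : gradedPiece (topIdeal Yex) d = ⊥ := by
  rw [Submodule.eq_bot_iff]
  rintro x ⟨f, hf, rfl⟩
  show mkQ f = 0
  rw [mkQ_eq_zero_iff]
  exact homog_mem_of_ge3 ((mem_homogeneousSubmodule _ _).mp hf) hd

/-! ### Dimension counts -/

lemma finrank_stdRep : Module.finrank ℂ stdRep = 2 := by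
  have hsurj : Function.Surjective coordSum := by
    intro z
    exact ⟨fun _ => z/3, by rw [coordSum_apply]; ring⟩
  have hrn := LinearMap.finrank_range_add_finrank_ker coordSum
  rw [LinearMap.range_eq_top.mpr hsurj, finrank_top, Module.finrank_self,
    Module.finrank_pi] at hrn
  simp only [Fintype.card_fin] at hrn
  rw [stdRep]
  omega

def eqv0 : gradedPiece (topIdeal Yex) 0 ≃ₗ[ℂ] ℂ :=
  (LinearEquiv.ofBijective B0 ⟨B0_injective, B0_surjective⟩).symm

def eqv1 : gradedPiece (topIdeal Yex) 1 ≃ₗ[ℂ] stdRep :=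
  (LinearEquiv.ofBijective B1 ⟨B1_injective, B1_surjective⟩).symm

def eqv2 : gradedPiece (topIdeal Yex) 2 ≃ₗ[ℂ] stdRep × ℂ :=
  (LinearEquiv.ofBijective B2 ⟨B2_injective, B2_surjective⟩).symm

lemma finrank_gp0 : Module.finrank ℂ (gradedPiece (topIdeal Yex) 0) = 1 := by
  rw [eqv0.finrank_eq, Module.finrank_self]

lemma finrank_gp1 : Module.finrank ℂ (gradedPiece (topIdeal Yex) 1) = 2 := by
  rw [eqv1.finrank_eq, finrank_stdRep]

lemma finrank_gp2 : Module.finrank ℂ (gradedPiece (topIdeal Yex) 2) = 3 := by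
  rw [eqv2.finrank_eq, Module.finrank_prod, finrank_stdRep, Module.finrank_self]

/-! ### Equivariance of the equivalences -/

lemma eqv0_equivariant (σ : Equiv.Perm (Fin 3)) (f : R3) (hf : f.IsHomogeneous 0)
    (A B : gradedPiece (topIdeal Yex) 0)
    (hA : (A : R3 ⧸ topIdeal Yex) = mkQ (rename (⇑σ) f))
    (hB : (B : R3 ⧸ topIdeal Yex) = mkQ f) :
    eqv0 A = eqv0 B := by
  have hren : rename (⇑σ) f = f := by
    conv_lhs => rw [eq_C_of_homog0 hf]
    rw [rename_C]
    exact (eq_C_of_homog0 hf).symm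
  exact congrArg eqv0 (Subtype.ext (by rw [hA, hB, hren]))

lemma eqv1_equivariant (σ : Equiv.Perm (Fin 3)) (f : R3)
    (A B : gradedPiece (topIdeal Yex) 1)
    (hA : (A : R3 ⧸ topIdeal Yex) = mkQ (rename (⇑σ) f))
    (hB : (B : R3 ⧸ topIdeal Yex) = mkQ f) :
    ((eqv1 A : stdRep) : Fin 3 → ℂ) = ((eqv1 B : stdRep) : Fin 3 → ℂ) ∘ ⇑σ⁻¹ := by
  set y := eqv1 B with hy
  have hb : B1 y = B := by
    rw [hy]
    exact (LinearEquiv.ofBijective B1 ⟨B1_injective, B1_surjective⟩).apply_symm_apply B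
  have hval : mkQ (L1map y.1) = mkQ f := by
    have := congrArg Subtype.val hb
    rw [hB] at this
    exact this
  have hmem := comp_inv_mem_stdRep y.1 y.2 σ
  have hb2 : B1 ⟨y.1 ∘ ⇑σ⁻¹, hmem⟩ = A := by
    refine Subtype.ext ?_
    show mkQ (L1map (y.1 ∘ ⇑σ⁻¹)) = (A : R3 ⧸ topIdeal Yex)
    rw [hA, ← rename_L1map, mkQ_eq_iff, ← map_sub]
    exact topIdeal_rename σ ((mkQ_eq_iff _ _).mp hval)
  have : eqv1 A = ⟨y.1 ∘ ⇑σ⁻¹, hmem⟩ := by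
    rw [eqv1, LinearEquiv.symm_apply_eq]
    exact hb2.symm
  rw [this]

lemma eqv2_equivariant (σ : Equiv.Perm (Fin 3)) (f : R3)
    (A B : gradedPiece (topIdeal Yex) 2)
    (hA : (A : R3 ⧸ topIdeal Yex) = mkQ (rename (⇑σ) f))
    (hB : (B : R3 ⧸ topIdeal Yex) = mkQ f) :
    (((eqv2 A).1 : Fin 3 → ℂ) = ((eqv2 B).1 : Fin 3 → ℂ) ∘ ⇑σ⁻¹) ∧
      (eqv2 A).2 = (eqv2 B).2 := by
  set y := eqv2 B with hy
  have hb : B2 y = B := by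
    rw [hy]
    exact (LinearEquiv.ofBijective B2 ⟨B2_injective, B2_surjective⟩).apply_symm_apply B
  have hval : mkQ (L2map (y.1.1, y.2)) = mkQ f := by
    have := congrArg Subtype.val hb
    rw [hB] at this
    exact this
  have hmem := comp_inv_mem_stdRep y.1.1 y.1.2 σ
  have hb2 : B2 (⟨y.1.1 ∘ ⇑σ⁻¹, hmem⟩, y.2) = A := by
    refine Subtype.ext ?_
    show mkQ (L2map (y.1.1 ∘ ⇑σ⁻¹, y.2)) = (A : R3 ⧸ topIdeal Yex)
    rw [hA, ← rename_L2map, mkQ_eq_iff, ← map_sub]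
    exact topIdeal_rename σ ((mkQ_eq_iff _ _).mp hval)
  have heq : eqv2 A = (⟨y.1.1 ∘ ⇑σ⁻¹, hmem⟩, y.2) := by
    rw [eqv2, LinearEquiv.symm_apply_eq]
    exact hb2.symm
  rw [heq]
  exact ⟨rfl, rfl⟩

/-- Example 2.5: for `P = (0,0,4)`, `Q = (1,1,2)` and `Y = S₃⟨P,Q⟩`, the
graded pieces of `Â(Y) = ℂ[x₁,x₂,x₃]/T(Y)` have dimensions `1, 2, 3` in degrees `0, 1, 2` and
vanish in degrees `≥ 3`; moreover, `S₃`-equivariantly, the degree-0 piece is the trivial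
representation, the degree-1 piece is the standard representation, and the degree-2 piece is the
direct sum of the standard and the trivial representation. -/
theorem example_graded_structure :
    (Module.finrank ℂ (gradedPiece (topIdeal Yex) 0) = 1 ∧
      Module.finrank ℂ (gradedPiece (topIdeal Yex) 1) = 2 ∧
      Module.finrank ℂ (gradedPiece (topIdeal Yex) 2) = 3 ∧
      ∀ d : ℕ, 3 ≤ d → gradedPiece (topIdeal Yex) d = ⊥) ∧
    (∃ e₀ : gradedPiece (topIdeal Yex) 0 ≃ₗ[ℂ] ℂ,
      ∀ (σ : Equiv.Perm (Fin 3)) (f : MvPolynomial (Fin 3) ℂ)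
        (hf : f ∈ homogeneousSubmodule (Fin 3) ℂ 0),
        e₀ ⟨Ideal.Quotient.mk (topIdeal Yex) (rename (⇑σ) f),
              ⟨rename (⇑σ) f, rename_mem_homogeneousSubmodule σ hf, rfl⟩⟩ =
          e₀ ⟨Ideal.Quotient.mk (topIdeal Yex) f, ⟨f, hf, rfl⟩⟩) ∧
    (∃ e₁ : gradedPiece (topIdeal Yex) 1 ≃ₗ[ℂ] stdRep,
      ∀ (σ : Equiv.Perm (Fin 3)) (f : MvPolynomial (Fin 3) ℂ)
        (hf : f ∈ homogeneousSubmodule (Fin 3) ℂ 1),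
        (e₁ ⟨Ideal.Quotient.mk (topIdeal Yex) (rename (⇑σ) f),
              ⟨rename (⇑σ) f, rename_mem_homogeneousSubmodule σ hf, rfl⟩⟩ : Fin 3 → ℂ) =
          (e₁ ⟨Ideal.Quotient.mk (topIdeal Yex) f, ⟨f, hf, rfl⟩⟩ : Fin 3 → ℂ) ∘ ⇑σ⁻¹) ∧
    (∃ e₂ : gradedPiece (topIdeal Yex) 2 ≃ₗ[ℂ] stdRep × ℂ,
      ∀ (σ : Equiv.Perm (Fin 3)) (f : MvPolynomial (Fin 3) ℂ)
        (hf : f ∈ homogeneousSubmodule (Fin 3) ℂ 2),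
        ((e₂ ⟨Ideal.Quotient.mk (topIdeal Yex) (rename (⇑σ) f),
              ⟨rename (⇑σ) f, rename_mem_homogeneousSubmodule σ hf, rfl⟩⟩).1 : Fin 3 → ℂ) =
            ((e₂ ⟨Ideal.Quotient.mk (topIdeal Yex) f, ⟨f, hf, rfl⟩⟩).1 : Fin 3 → ℂ) ∘ ⇑σ⁻¹ ∧
          (e₂ ⟨Ideal.Quotient.mk (topIdeal Yex) (rename (⇑σ) f),
              ⟨rename (⇑σ) f, rename_mem_homogeneousSubmodule σ hf, rfl⟩⟩).2 =
            (e₂ ⟨Ideal.Quotient.mk (topIdeal Yex) f, ⟨f, hf, rfl⟩⟩).2) := by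
  refine ⟨⟨finrank_gp0, finrank_gp1, finrank_gp2, fun d hd => gradedPiece_eq_bot hd⟩,
    ⟨eqv0, fun σ f hf => eqv0_equivariant σ f hf _ _ rfl rfl⟩,
    ⟨eqv1, fun σ f hf => eqv1_equivariant σ f _ _ rfl rfl⟩,
    ⟨eqv2, fun σ f hf => eqv2_equivariant σ f _ _ rfl rfl⟩⟩
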